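/- arXiv:1405.0244 — 7 statements merged into one kernel-verified Lean document; each statement's English description precedes it below -/
import Mathlib

section
/- The group G = ∏_{n ∈ ℕ} Sym₀(ℤ), the countable direct product of copies of the group of finitely supported permutations of ℤ, contains a subgroup isomorphic to the free group F₂ on two generators. -/
/-- `Sym₀(ℤ)`: the group of permutations of `ℤ` with finite support. -/
def finSupportPerms : Subgroup (Equiv.Perm ℤ) where
  carrier := {π | {x : ℤ | π x ≠ x}.Finite}
  one_mem' := by simp
  mul_mem' := by
    intro a b ha hb
    apply Set.Finite.subset (ha.union hb)
    intro x hx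
    by_contra h
    try push_neg at h
    simp only [Set.mem_setOf_eq, Set.mem_union] at h hx
    push_neg at h
    apply hx
    simp [Equiv.Perm.mul_apply, h.2, h.1]
  inv_mem' := by
    intro a ha
    apply Set.Finite.subset (ha.image a)
    intro x hx
    simp only [Set.mem_setOf_eq] at hx
    refine ⟨a⁻¹ x, ?_, by simp⟩
    simp only [Set.mem_setOf_eq]
    rw [show a (a⁻¹ x) = x from a.apply_symm_apply x]
    exact fun h => hx h.symm

lemma mem_finSupportPerms {π : Equiv.Perm ℤ} :
    π ∈ finSupportPerms ↔ {x : ℤ | π x ≠ x}.Finite := Iff.rfl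

lemma swap_mem_finSupportPerms (a b : ℤ) : Equiv.swap a b ∈ finSupportPerms := by
  rw [mem_finSupportPerms]
  apply Set.Finite.subset ((Set.finite_singleton b).insert a)
  intro x hx
  simp only [Set.mem_setOf_eq] at hx
  by_contra hc
  simp only [Set.mem_insert_iff, Set.mem_singleton_iff] at hc
  push_neg at hc
  exact hx (Equiv.swap_apply_of_ne_of_ne hc.1 hc.2)

/-- Any injective map agrees with some finitely supported permutation on a given finite set. -/
lemma exists_finSupport_agree (f : ℤ → ℤ) (hf : Function.Injective f) (S : Finset ℤ) :
    ∃ π : Equiv.Perm ℤ, π ∈ finSupportPerms ∧ ∀ x ∈ S, π x = f x := by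
  classical
  induction S using Finset.induction_on with
  | empty => exact ⟨1, one_mem _, by simp⟩
  | @insert a S' ha ih =>
    obtain ⟨π, hπ, hag⟩ := ih
    by_cases h : π a = f a
    · refine ⟨π, hπ, ?_⟩
      intro x hx
      rcases Finset.mem_insert.mp hx with rfl | hx
      · exact h
      · exact hag x hx
    · refine ⟨π * Equiv.swap a (π⁻¹ (f a)), mul_mem hπ (swap_mem_finSupportPerms _ _), ?_⟩
      intro x hx
      rcases Finset.mem_insert.mp hx with rfl | hx
      · simp [Equiv.Perm.mul_apply]
      · have hxa : x ≠ a := fun h' => ha (h' ▸ hx)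
        have hxb : x ≠ π⁻¹ (f a) := by
          intro h'
          have : π x = f a := by rw [h']; simp
          rw [hag x hx] at this
          exact hxa (hf this)
        simp only [Equiv.Perm.mul_apply, Equiv.swap_apply_of_ne_of_ne hxa hxb]
        exact hag x hx

/-- The left regular representation of a group on `ℤ`, transported along an equivalence. -/
def regRep {G : Type*} [Group G] (e : G ≃ ℤ) : G →* Equiv.Perm ℤ where
  toFun w := e.symm.trans ((Equiv.mulLeft w).trans e)
  map_one' := by ext x; simp
  map_mul' := by
    intro w₁ w₂
    ext x
    simp [mul_assoc]

lemma regRep_apply {G : Type*} [Group G] (e : G ≃ ℤ) (w : G) (x : ℤ) :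
    regRep e w x = e (w * e.symm x) := rfl

/-- The product `∏_{n ∈ ℕ} Sym₀(ℤ)` contains a subgroup isomorphic to the free group
on two generators. -/
theorem prod_finSupportPerms_contains_free_group_of_rank_two :
    ∃ φ : FreeGroup (Fin 2) →* (ℕ → finSupportPerms), Function.Injective φ := by
  classical
  have hcount : Countable (FreeGroup (Fin 2)) := FreeGroup.toWord_injective.countable
  have hinf : Infinite (FreeGroup (Fin 2)) := by
    refine Infinite.of_injective (fun n : ℕ => FreeGroup.of (0 : Fin 2) ^ n) ?_
    have h : Function.Injective (fun n : ℕ =>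
        (FreeGroup.lift (fun _ : Fin 2 => Multiplicative.ofAdd (1:ℤ))) (FreeGroup.of 0 ^ n)) := by
      intro m n hmn
      simp only [map_pow, FreeGroup.lift_apply_of, ← ofAdd_nsmul] at hmn
      have := Multiplicative.ofAdd.injective hmn
      simpa using this
    exact fun m n hmn => h (by simp only [hmn])
  obtain ⟨e⟩ : Nonempty (FreeGroup (Fin 2) ≃ ℤ) := nonempty_equiv_of_countable
  -- finitary approximations of the regular representation of the generators
  have hex : ∀ (i : Fin 2) (n : ℕ), ∃ π : Equiv.Perm ℤ, π ∈ finSupportPerms ∧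
      ∀ x ∈ Finset.Icc (-(n:ℤ)) n, π x = regRep e (FreeGroup.of i) x :=
    fun i n => exists_finSupport_agree _ (Equiv.injective _) _
  choose π hπmem hπag using hex
  set a : Fin 2 → (ℕ → finSupportPerms) := fun i n => ⟨π i n, hπmem i n⟩ with ha
  set φ := FreeGroup.lift a with hφ
  -- pointwise convergence of the approximations to the regular representation
  have key : ∀ w : FreeGroup (Fin 2), ∀ x : ℤ,
      ∃ N : ℕ, ∀ n ≥ N, ((φ w n : finSupportPerms) : Equiv.Perm ℤ) x = regRep e w x := by
    intro w
    induction w using FreeGroup.induction_on with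
    | C1 =>
      intro x
      exact ⟨0, fun n _ => by simp⟩
    | of i =>
      intro x
      refine ⟨x.natAbs, fun n hn => ?_⟩
      have hx : x ∈ Finset.Icc (-(n:ℤ)) n := by
        rw [Finset.mem_Icc]
        constructor
        · rw [neg_le]
          calc -x ≤ |x| := neg_le_abs x
          _ = (x.natAbs : ℤ) := Int.abs_eq_natAbs x
          _ ≤ n := by exact_mod_cast hn
        · calc x ≤ |x| := le_abs_self x
          _ = (x.natAbs : ℤ) := Int.abs_eq_natAbs x
          _ ≤ n := by exact_mod_cast hn
      show ((φ (FreeGroup.of i) n : finSupportPerms) : Equiv.Perm ℤ) x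
          = regRep e (FreeGroup.of i) x
      have h1 : φ (FreeGroup.of i) = a i := FreeGroup.lift_apply_of
      rw [h1]
      exact hπag i n x hx
    | inv_of i _ =>
      intro x
      set y := regRep e ((FreeGroup.of i)⁻¹) x with hy
      refine ⟨y.natAbs, fun n hn => ?_⟩
      have hyIcc : y ∈ Finset.Icc (-(n:ℤ)) n := by
        rw [Finset.mem_Icc]
        constructor
        · rw [neg_le]
          calc -y ≤ |y| := neg_le_abs y
          _ = (y.natAbs : ℤ) := Int.abs_eq_natAbs y
          _ ≤ n := by exact_mod_cast hn
        · calc y ≤ |y| := le_abs_self y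
          _ = (y.natAbs : ℤ) := Int.abs_eq_natAbs y
          _ ≤ n := by exact_mod_cast hn
      show ((φ ((FreeGroup.of i)⁻¹) n : finSupportPerms) : Equiv.Perm ℤ) x
          = regRep e ((FreeGroup.of i)⁻¹) x
      have hφinv : φ ((FreeGroup.of i)⁻¹) n = (a i n)⁻¹ := by
        rw [map_inv]
        have h1 : φ (FreeGroup.of i) = a i := FreeGroup.lift_apply_of
        rw [h1]; rfl
      rw [hφinv]
      have hag := hπag i n y hyIcc
      have hxy : regRep e (FreeGroup.of i) y = x := by
        rw [hy, ← Equiv.Perm.mul_apply, ← map_mul, mul_inv_cancel, map_one]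
        rfl
      have : (π i n) y = x := by rw [hag, hxy]
      calc (((a i n)⁻¹ : finSupportPerms) : Equiv.Perm ℤ) x
          = (π i n)⁻¹ x := rfl
        _ = y := by rw [← this]; simp
        _ = regRep e ((FreeGroup.of i)⁻¹) x := rfl
    | mul w₁ w₂ ih1 ih2 =>
      intro x
      obtain ⟨N₂, hN₂⟩ := ih2 x
      obtain ⟨N₁, hN₁⟩ := ih1 (regRep e w₂ x)
      refine ⟨max N₁ N₂, fun n hn => ?_⟩
      have h2 := hN₂ n (le_trans (le_max_right _ _) hn)
      have h1 := hN₁ n (le_trans (le_max_left _ _) hn)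
      have hmul : ((φ (w₁ * w₂) n : finSupportPerms) : Equiv.Perm ℤ) x
          = ((φ w₁ n : finSupportPerms) : Equiv.Perm ℤ)
            (((φ w₂ n : finSupportPerms) : Equiv.Perm ℤ) x) := by
        rw [map_mul]; rfl
      rw [hmul, h2, h1, map_mul]
      rfl
  refine ⟨φ, (injective_iff_map_eq_one φ).mpr ?_⟩
  intro w hw
  obtain ⟨N, hN⟩ := key w (e 1)
  have h1 : ((φ w N : finSupportPerms) : Equiv.Perm ℤ) (e 1) = e 1 := by
    rw [hw]; simp
  have h2 := hN N le_rfl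
  rw [h1] at h2
  have : e (w * e.symm (e 1)) = e 1 := h2.symm
  simp only [Equiv.symm_apply_apply, mul_one] at this
  exact e.injective this
end

section
/- If a class of groups C is closed under taking subgroups and unrestricted wreath products, then C satisfies the Gruenberg condition: for any chain K ⊴ H ⊴ G with G/H ∈ C and H/K ∈ C, there exists L ⊴ G with L ⊆ K and G/L ∈ C. -/
abbrev GroupClass : Type 1 := ∀ (G : Type) [Group G], Prop

def IsoClosed (C : GroupClass) : Prop :=
  ∀ (G H : Type) [Group G] [Group H], Nonempty (G ≃* H) → C G → C H

/-- `N` is a normal subgroup with quotient in the class `C`. -/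
def NormalQuotientIn (C : GroupClass) {G : Type} [Group G] (N : Subgroup G) : Prop :=
  ∃ h : N.Normal, by haveI := h; exact C (G ⧸ N)

/-- `G` is residually `C`: every nontrivial element survives in a surjective image lying in `C`. -/
def Residually (C : GroupClass) (G : Type*) [Group G] : Prop :=
  ∀ g : G, g ≠ 1 → ∃ (Q : GrpCat.{0}) (φ : G →* Q), Function.Surjective φ ∧ C Q ∧ φ g ≠ 1

/-- The Gruenberg condition for a class of groups `C`. -/
def GruenbergCondition (C : GroupClass) : Prop :=
  ∀ (G : Type) [Group G] (H K : Subgroup G) [H.Normal] [(K.subgroupOf H).Normal],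
    K ≤ H → C (G ⧸ H) → C (↥H ⧸ K.subgroupOf H) →
    ∃ L : Subgroup G, L ≤ K ∧ NormalQuotientIn C L

/-- A root class of groups. -/
def RootClass (R : GroupClass) : Prop :=
  (∃ G : GrpCat.{0}, Nontrivial G ∧ R G) ∧
  IsoClosed R ∧
  (∀ (G : Type) [Group G] (H : Subgroup G), R G → R H) ∧
  (∀ (G H : Type) [Group G] [Group H], R G → R H → R (G × H)) ∧
  GruenbergCondition R

/-- Amenability: a finitely additive left-invariant probability measure on all subsets. -/
def IsAmenable (G : Type*) [Group G] : Prop :=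
  ∃ m : Set G → ℝ,
    m Set.univ = 1 ∧
    (∀ A : Set G, 0 ≤ m A) ∧
    (∀ A B : Set G, Disjoint A B → m (A ∪ B) = m A + m B) ∧
    (∀ (g : G) (A : Set G), m ((g * ·) '' A) = m A)

def amenableClass : GroupClass := fun G inst => @IsAmenable G inst

def solvableClass : GroupClass := fun G inst => @IsSolvable G inst

/-- The shift automorphism of the unrestricted power `B → A` given by `b : B`. -/
def wreathShift (A B : Type) [Group A] [Group B] (b : B) : (B → A) ≃* (B → A) where
  toFun f := fun x => f (b⁻¹ * x)
  invFun f := fun x => f (b * x)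
  left_inv f := by ext x; simp [mul_assoc]
  right_inv f := by ext x; simp [mul_assoc]
  map_mul' f g := rfl

/-- The action of `B` on the unrestricted power `B → A` by shifting coordinates. -/
def wreathShiftHom (A B : Type) [Group A] [Group B] : B →* MulAut (B → A) where
  toFun := wreathShift A B
  map_one' := by ext f x; simp [wreathShift]
  map_mul' b₁ b₂ := by ext f x; simp [wreathShift, mul_assoc]

/-- The unrestricted (complete) wreath product `A ≀ B = (∏_{b ∈ B} A) ⋊ B`. -/
def WreathProduct (A B : Type) [Group A] [Group B] : Type :=
  SemidirectProduct (B → A) B (wreathShiftHom A B)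

instance (A B : Type) [Group A] [Group B] : Group (WreathProduct A B) :=
  inferInstanceAs (Group (SemidirectProduct (B → A) B (wreathShiftHom A B)))

/-- If a class of groups `C` is closed under isomorphism, taking subgroups and
unrestricted wreath products, then `C` satisfies the Gruenberg condition. -/
theorem gruenberg_of_closed_under_wreath (C : GroupClass)
    (hiso : IsoClosed C)
    (hsub : ∀ (G : Type) [Group G] (H : Subgroup G), C G → C H)
    (hwr : ∀ (A B : Type) [Group A] [Group B], C A → C B → C (WreathProduct A B)) :
    GruenbergCondition C := by
  intro G _ H K _ _ hKH hGH hHK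
  classical
  let π : G →* G ⧸ H := QuotientGroup.mk' H
  let t : G ⧸ H → G := fun q => if q = 1 then 1 else Quotient.out q
  have ht : ∀ q, π (t q) = q := by
    intro q
    by_cases h : q = 1
    · simp [t, h, π]
    · simp only [t, if_neg h, π]
      exact QuotientGroup.out_eq' q
  have ht1 : t 1 = 1 := by simp [t]
  have hmem : ∀ (g : G) (q : G ⧸ H), (t q)⁻¹ * g * t ((π g)⁻¹ * q) ∈ H := by
    intro g q
    have h1 : π ((t q)⁻¹ * g * t ((π g)⁻¹ * q)) = 1 := by
      simp only [map_mul, map_inv, ht]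
      group
    exact (QuotientGroup.eq_one_iff _).mp h1
  let fh : G → (G ⧸ H) → ↥H := fun g q => ⟨(t q)⁻¹ * g * t ((π g)⁻¹ * q), hmem g q⟩
  have hfh_mul : ∀ (g h : G) (q : G ⧸ H),
      fh (g * h) q = fh g q * fh h ((π g)⁻¹ * q) := by
    intro g h q
    apply Subtype.ext
    show (t q)⁻¹ * (g * h) * t ((π (g * h))⁻¹ * q)
        = ((t q)⁻¹ * g * t ((π g)⁻¹ * q)) * ((t ((π g)⁻¹ * q))⁻¹ * h * t ((π h)⁻¹ * ((π g)⁻¹ * q)))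
    have : (π (g * h))⁻¹ * q = (π h)⁻¹ * ((π g)⁻¹ * q) := by
      simp [map_mul, mul_inv_rev, mul_assoc]
    rw [this]
    group
  let F : G → (G ⧸ H) → (↥H ⧸ K.subgroupOf H) := fun g q => QuotientGroup.mk (fh g q)
  let Φ : G →* WreathProduct (↥H ⧸ K.subgroupOf H) (G ⧸ H) :=
  { toFun := fun g => ⟨F g, π g⟩
    map_one' := by
      refine SemidirectProduct.ext ?_ (by simp; rfl)
      funext q
      show QuotientGroup.mk (fh 1 q) = 1
      have : fh 1 q = 1 := by
        apply Subtype.ext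
        show (t q)⁻¹ * 1 * t ((π 1)⁻¹ * q) = 1
        simp
      rw [this]; rfl
    map_mul' := by
      intro g h
      refine SemidirectProduct.ext ?_ (by
        show π (g * h) = (SemidirectProduct.mk (F g) (π g) * SemidirectProduct.mk (F h) (π h)).right
        rw [map_mul]; rfl)
      funext q
      show F (g * h) q = F g q * (wreathShiftHom _ _ (π g) (F h)) q
      have : (wreathShiftHom (↥H ⧸ K.subgroupOf H) (G ⧸ H) (π g) (F h)) q
          = F h ((π g)⁻¹ * q) := rfl
      rw [this]
      show QuotientGroup.mk (fh (g * h) q) = QuotientGroup.mk (fh g q) * QuotientGroup.mk (fh h ((π g)⁻¹ * q))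
      rw [hfh_mul g h q]
      rfl }
  refine ⟨Φ.ker, ?_, inferInstance, ?_⟩
  · intro g hg
    have hg' : Φ g = 1 := hg
    have hright : π g = 1 := congrArg SemidirectProduct.right hg'
    have hgH : g ∈ H := by simpa [π, QuotientGroup.eq_one_iff] using hright
    have hleft : F g 1 = 1 := congrFun (congrArg SemidirectProduct.left hg') 1
    have hfh1 : fh g 1 = ⟨g, hgH⟩ := by
      apply Subtype.ext
      show (t 1)⁻¹ * g * t ((π g)⁻¹ * 1) = g
      rw [hright]
      simp [ht1]
    have : (fh g 1 : ↥H) ∈ K.subgroupOf H := (QuotientGroup.eq_one_iff _).mp hleft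
    rw [hfh1] at this
    exact this
  · have hC : C (WreathProduct (↥H ⧸ K.subgroupOf H) (G ⧸ H)) := hwr _ _ hHK hGH
    have hCr : C ↥Φ.range := hsub _ _ hC
    exact hiso _ _ ⟨(QuotientGroup.quotientKerEquivRange Φ).symm⟩ hCr
end

section
/- If a class of groups C satisfies the Gruenberg condition, then every (residually C)-by-C group is residually C: if N ⊴ G, N is residually C, and G/N ∈ C, then G is residually C. -/
/-- If a class of groups `C` satisfies the Gruenberg condition, then every
(residually `C`)-by-`C` group is residually `C`. -/
theorem residually_of_residually_by_C (C : GroupClass)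
    (hiso : IsoClosed C) (hgru : GruenbergCondition C)
    (G : Type) [Group G] (N : Subgroup G) [N.Normal]
    (hN : Residually C N) (hQ : C (G ⧸ N)) :
    Residually C G := by
  intro g hg
  by_cases hgN : g ∈ N
  · obtain ⟨Q, φ, hsurj, hCQ, hφg⟩ :=
      hN ⟨g, hgN⟩ (fun h => hg (by simpa using congrArg Subtype.val h))
    set K : Subgroup N := φ.ker with hKdef
    set K' : Subgroup G := K.map N.subtype with hK'def
    have hK' : K'.subgroupOf N = K :=
      Subgroup.comap_map_eq_self_of_injective N.subtype_injective K
    haveI hnorm : (K'.subgroupOf N).Normal := by rw [hK']; exact φ.normal_ker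
    have hK'N : K' ≤ N := Subgroup.map_subtype_le K
    have hCK : C (↥N ⧸ K'.subgroupOf N) := by
      have h1 : C (↥N ⧸ K) :=
        hiso Q (↥N ⧸ K) ⟨(QuotientGroup.quotientKerEquivOfSurjective φ hsurj).symm⟩ hCQ
      exact hiso _ _ ⟨(QuotientGroup.quotientMulEquivOfEq hK').symm⟩ h1
    obtain ⟨L, hLK', hLnorm, hCL⟩ := hgru G N K' hK'N hQ hCK
    haveI := hLnorm
    refine ⟨GrpCat.of (G ⧸ L), QuotientGroup.mk' L, QuotientGroup.mk'_surjective L, hCL, ?_⟩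
    intro h1
    have hgL : g ∈ L := (QuotientGroup.eq_one_iff g).mp h1
    obtain ⟨n, hnK, hn⟩ := hLK' hgL
    have : (⟨g, hgN⟩ : N) ∈ K := by
      have : n = ⟨g, hgN⟩ := Subtype.ext hn
      rwa [this] at hnK
    exact hφg this
  · refine ⟨GrpCat.of (G ⧸ N), QuotientGroup.mk' N, QuotientGroup.mk'_surjective N, hQ, ?_⟩
    intro h1
    exact hgN ((QuotientGroup.eq_one_iff g).mp h1)
end

section
/- Every virtually residually amenable group is residually amenable: if G has a finite-index subgroup H that is residually amenable, then G is residually amenable. -/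
section FA
variable {X : Type*} (m : Set X → ℝ)

/-- The conjunction of the first three amenability-measure axioms. -/
def IsFAMeasure : Prop :=
  m Set.univ = 1 ∧ (∀ A, 0 ≤ m A) ∧ ∀ A B, Disjoint A B → m (A ∪ B) = m A + m B

namespace IsFAMeasure
variable {m} (hm : IsFAMeasure m)
include hm

lemma univ : m Set.univ = 1 := hm.1
lemma nonneg (A : Set X) : 0 ≤ m A := hm.2.1 A
lemma add (A B : Set X) (h : Disjoint A B) : m (A ∪ B) = m A + m B := hm.2.2 A B h

lemma empty : m ∅ = 0 := by
  have := hm.add ∅ ∅ (disjoint_bot_left)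
  simp at this; linarith

lemma mono {A B : Set X} (h : A ⊆ B) : m A ≤ m B := by
  have hd : Disjoint A (B \ A) := Set.disjoint_sdiff_right.mono_left le_rfl
  have : m (A ∪ B \ A) = m A + m (B \ A) := hm.add _ _ hd
  rw [Set.union_diff_cancel h] at this
  have := hm.nonneg (B \ A); linarith

lemma le_one (A : Set X) : m A ≤ 1 := hm.univ ▸ hm.mono (Set.subset_univ A)

lemma finsetSum {ι : Type*} (s : Finset ι) (A : ι → Set X)
    (hd : ∀ i ∈ s, ∀ j ∈ s, i ≠ j → Disjoint (A i) (A j)) :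
    m (⋃ i ∈ s, A i) = ∑ i ∈ s, m (A i) := by
  classical
  induction s using Finset.induction_on with
  | empty => simpa using hm.empty
  | insert _ _ hx _ =>
    rename_i a s ih
    rw [Finset.set_biUnion_insert, Finset.sum_insert hx,
      hm.add _ _ ?_, ih ?_]
    · intro i hi j hj hij
      exact hd i (Finset.mem_insert_of_mem hi) j (Finset.mem_insert_of_mem hj) hij
    · rw [Set.disjoint_iff_inter_eq_empty]
      ext x; simp only [Set.mem_inter_iff, Set.mem_iUnion, Set.mem_empty_iff_false, iff_false,
        not_and, not_exists]
      rintro hxa i hi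
      have := hd a (Finset.mem_insert_self a s) i (Finset.mem_insert_of_mem hi)
        (by rintro rfl; exact hx hi)
      exact fun hxi => (Set.disjoint_iff_inter_eq_empty.mp this).subset ⟨hxa, hxi⟩ |>.elim

end IsFAMeasure
end FA
section Jint
variable {X : Type*} (m : Set X → ℝ)

/-- Layer-cake "integral" of a `ℤ`-valued function, computed with `N` layers. -/
noncomputable def Jint (N : ℕ) (u : X → ℤ) : ℝ := ∑ k ∈ Finset.Icc 1 N, m {x | (k : ℤ) ≤ u x}

namespace IsFAMeasure
variable {m} (hm : IsFAMeasure m)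
include hm

lemma Jint_nonneg (N : ℕ) (u : X → ℤ) : 0 ≤ Jint m N u :=
  Finset.sum_nonneg fun _ _ => hm.nonneg _

lemma Jint_le (N : ℕ) (u : X → ℤ) : Jint m N u ≤ N := by
  calc Jint m N u ≤ ∑ k ∈ Finset.Icc 1 N, (1:ℝ) :=
        Finset.sum_le_sum fun _ _ => hm.le_one _
    _ = N := by simp

lemma Jint_congr {N N' : ℕ} (u : X → ℤ) (hu : ∀ x, u x ≤ (N:ℤ)) (h : N ≤ N') :
    Jint m N' u = Jint m N u := by
  unfold Jint
  rw [← Finset.sum_subset (Finset.Icc_subset_Icc le_rfl h)]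
  intro k hk hk'
  simp only [Finset.mem_Icc] at hk hk'
  have : {x | (k:ℤ) ≤ u x} = ∅ := by
    ext x; simp only [Set.mem_setOf_eq, Set.mem_empty_iff_false, iff_false, not_le]
    have : (N:ℤ) < k := by omega
    exact lt_of_le_of_lt (hu x) this
  rw [this, hm.empty]

/-- A set is the disjoint union of its slices by the values of a bounded `ℤ`-valued map. -/
lemma measure_partition (N : ℕ) (w : X → ℤ) (h0 : ∀ x, 0 ≤ w x) (hN : ∀ x, w x ≤ (N:ℤ))
    (A : Set X) : m A = ∑ j ∈ Finset.range (N+1), m (A ∩ {x | w x = (j:ℤ)}) := by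
  rw [← hm.finsetSum]
  · congr 1
    ext x
    simp only [Set.mem_iUnion, Set.mem_inter_iff, Set.mem_setOf_eq]
    constructor
    · intro hx
      refine ⟨(w x).toNat, ?_, hx, by simp [Int.toNat_of_nonneg (h0 x)]⟩
      have := hN x; have := h0 x
      simp only [Finset.mem_range]; omega
    · rintro ⟨j, _, hx, _⟩; exact hx
  · intro i _ j _ hij
    rw [Set.disjoint_iff_inter_eq_empty]
    ext x
    simp only [Set.mem_inter_iff, Set.mem_setOf_eq, Set.mem_empty_iff_false, iff_false]
    rintro ⟨⟨-, h1⟩, -, h2⟩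
    exact hij (by omega)

/-- Adding an indicator adds the measure of the set. -/
lemma Jint_add_indicator (N : ℕ) (w : X → ℤ) (h0 : ∀ x, 0 ≤ w x) (hN : ∀ x, w x ≤ (N:ℤ))
    (A : Set X) [DecidablePred (· ∈ A)] :
    Jint m (N+1) (fun x => w x + (if x ∈ A then 1 else 0)) = Jint m N w + m A := by
  classical
  have key : ∀ k ∈ Finset.Icc 1 (N+1),
      m {x | (k:ℤ) ≤ w x + (if x ∈ A then 1 else 0)}
        = m {x | (k:ℤ) ≤ w x} + m (A ∩ {x | w x = (k:ℤ) - 1}) := by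
    intro k hk
    have hk1 : 1 ≤ k := (Finset.mem_Icc.mp hk).1
    rw [← hm.add]
    · congr 1
      ext x
      simp only [Set.mem_setOf_eq, Set.mem_union, Set.mem_inter_iff]
      by_cases hx : x ∈ A
      · simp only [hx, if_true, true_and]; omega
      · simp only [hx, if_false, false_and, or_false]; omega
    · rw [Set.disjoint_iff_inter_eq_empty]
      ext x
      simp only [Set.mem_inter_iff, Set.mem_setOf_eq, Set.mem_empty_iff_false, iff_false]
      rintro ⟨h1, -, h2⟩; omega
  have e2 : ∑ k ∈ Finset.Icc 1 (N+1), m (A ∩ {x | w x = (k:ℤ) - 1}) = m A := by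
    rw [hm.measure_partition N w h0 hN A, ← Finset.Ico_add_one_right_eq_Icc,
      Finset.sum_Ico_eq_sum_range]
    refine Finset.sum_congr (by norm_num) fun j _ => ?_
    congr 2
    push_cast
    ring
  calc Jint m (N+1) (fun x => w x + (if x ∈ A then 1 else 0))
      = ∑ k ∈ Finset.Icc 1 (N+1),
          (m {x | (k:ℤ) ≤ w x} + m (A ∩ {x | w x = (k:ℤ) - 1})) :=
        Finset.sum_congr rfl key
    _ = Jint m (N+1) w + ∑ k ∈ Finset.Icc 1 (N+1), m (A ∩ {x | w x = (k:ℤ) - 1}) :=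
        Finset.sum_add_distrib
    _ = Jint m N w + m A := by rw [e2, hm.Jint_congr w hN (Nat.le_succ N)]

/-- Full additivity of the layer-cake integral on bounded nonnegative `ℤ`-valued maps. -/
lemma Jint_add (Nu Nv : ℕ) (u v : X → ℤ)
    (hu0 : ∀ x, 0 ≤ u x) (huN : ∀ x, u x ≤ (Nu:ℤ))
    (hv0 : ∀ x, 0 ≤ v x) (hvN : ∀ x, v x ≤ (Nv:ℤ)) :
    Jint m (Nu + Nv) (fun x => u x + v x) = Jint m Nu u + Jint m Nv v := by
  classical
  induction Nv generalizing v with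
  | zero =>
    have hv : ∀ x, v x = 0 := fun x => le_antisymm (by simpa using hvN x) (hv0 x)
    have : (fun x => u x + v x) = u := by funext x; simp [hv x]
    rw [this]
    have : Jint m 0 v = 0 := by simp [Jint]
    simp [this]
  | succ Nv ih =>
    set A : Set X := {x | 1 ≤ v x} with hA
    set v' : X → ℤ := fun x => v x - (if x ∈ A then 1 else 0) with hv'
    have hv'0 : ∀ x, 0 ≤ v' x := by
      intro x; by_cases hx : x ∈ A
      · simp only [hv', hx, if_true]; have : 1 ≤ v x := hx; omega
      · simp only [hv', hx, if_false]; have := hv0 x; omega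
    have hv'N : ∀ x, v' x ≤ (Nv:ℤ) := by
      intro x; by_cases hx : x ∈ A
      · simp only [hv', hx, if_true]; have := hvN x; push_cast at *; omega
      · simp only [hv', hx, if_false]
        have hvx : v x < 1 := not_le.mp hx
        have := hv0 x; omega
    have hvsplit : v = fun x => v' x + (if x ∈ A then 1 else 0) := by
      funext x; by_cases hx : x ∈ A <;> simp [hv', hx]
    have huv' : ∀ x, u x + v' x ≤ ((Nu + Nv : ℕ):ℤ) := by
      intro x; have := huN x; have := hv'N x; push_cast; omega
    have step1 : Jint m (Nu + (Nv+1)) (fun x => u x + v x)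
        = Jint m (Nu + Nv) (fun x => u x + v' x) + m A := by
      have : (fun x => u x + v x)
          = fun x => (u x + v' x) + (if x ∈ A then 1 else 0) := by
        funext x
        conv_lhs => rw [hvsplit]
        ring
      rw [this]
      exact hm.Jint_add_indicator (Nu + Nv) (fun x => u x + v' x)
        (fun x => add_nonneg (hu0 x) (hv'0 x)) huv' A
    have step2 : Jint m (Nv+1) v = Jint m Nv v' + m A := by
      conv_lhs => rw [hvsplit]
      exact hm.Jint_add_indicator Nv v' hv'0 hv'N A
    rw [step1, ih v' hv'0 hv'N, step2]
    ring

end IsFAMeasure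
end Jint
section Mean
open Filter

/-- A fixed ultrafilter extending `atTop` on `ℕ`. -/
noncomputable def UF : Ultrafilter ℕ := Ultrafilter.of Filter.atTop

lemma UF_le_atTop : (UF : Filter ℕ) ≤ Filter.atTop := Ultrafilter.of_le _

lemma exists_ulim (a : ℕ → ℝ) (h : ∀ n, a n ∈ Set.Icc (0:ℝ) 1) :
    ∃ x, Filter.Tendsto a UF (nhds x) := by
  have hle : (↑(UF.map a) : Filter ℝ) ≤ Filter.principal (Set.Icc (0:ℝ) 1) := by
    rw [Ultrafilter.coe_map, Filter.le_principal_iff]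
    exact Filter.mem_map.mpr (Filter.Eventually.of_forall h)
  obtain ⟨x, -, hx⟩ := (isCompact_Icc (a := (0:ℝ)) (b := 1)).ultrafilter_le_nhds
    (UF.map a) hle
  exact ⟨x, by rwa [Filter.Tendsto, ← Ultrafilter.coe_map]⟩

open Classical in
/-- Limit along `UF` of a sequence with values in `[0,1]` (junk value otherwise). -/
noncomputable def ulim (a : ℕ → ℝ) : ℝ :=
  if h : ∀ n, a n ∈ Set.Icc (0:ℝ) 1 then (exists_ulim a h).choose else 0

lemma ulim_spec (a : ℕ → ℝ) (h : ∀ n, a n ∈ Set.Icc (0:ℝ) 1) :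
    Filter.Tendsto a UF (nhds (ulim a)) := by
  unfold ulim
  rw [dif_pos h]
  exact (exists_ulim a h).choose_spec

variable {X : Type*}

/-- Discretized approximation of the mean of `f` at scale `n+1`. -/
noncomputable def ISeq (m : Set X → ℝ) (f : X → ℝ) (n : ℕ) : ℝ :=
  Jint m (n+1) (fun x => ⌊((n:ℝ)+1) * f x⌋) / ((n:ℝ)+1)

/-- The mean of a `[0,1]`-valued function w.r.t. a finitely additive measure. -/
noncomputable def fmean (m : Set X → ℝ) (f : X → ℝ) : ℝ := ulim (ISeq m f)

namespace IsFAMeasure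
variable {m : Set X → ℝ} (hm : IsFAMeasure m)
include hm

lemma ISeq_mem_Icc (f : X → ℝ) (n : ℕ) : ISeq m f n ∈ Set.Icc (0:ℝ) 1 := by
  have hpos : (0:ℝ) < (n:ℝ)+1 := by positivity
  unfold ISeq
  constructor
  · exact div_nonneg (hm.Jint_nonneg _ _) hpos.le
  · rw [div_le_one hpos]
    have := hm.Jint_le (n+1) (fun x => ⌊((n:ℝ)+1) * f x⌋)
    push_cast at this ⊢
    linarith

lemma fmean_tendsto (f : X → ℝ) :
    Filter.Tendsto (ISeq m f) UF (nhds (fmean m f)) :=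
  ulim_spec _ (hm.ISeq_mem_Icc f)

lemma fmean_nonneg (f : X → ℝ) : 0 ≤ fmean m f :=
  ge_of_tendsto' (hm.fmean_tendsto f) fun n => (hm.ISeq_mem_Icc f n).1

lemma fmean_one : fmean m (fun _ => 1) = 1 := by
  have hseq : ∀ n, ISeq m (fun _ => (1:ℝ)) n = 1 := by
    intro n
    have hfloor : (fun x : X => ⌊((n:ℝ)+1) * 1⌋) = fun _ => ((n:ℕ)+1 : ℤ) := by
      funext x
      rw [mul_one]
      norm_num
    unfold ISeq
    rw [hfloor]
    have : Jint m (n+1) (fun _ : X => ((n:ℕ)+1 : ℤ)) = ((n:ℝ)+1) := by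
      unfold Jint
      have : ∀ k ∈ Finset.Icc 1 (n+1), m {x : X | (k:ℤ) ≤ ((n:ℕ)+1:ℤ)} = 1 := by
        intro k hk
        have hk' := Finset.mem_Icc.mp hk
        have : {x : X | (k:ℤ) ≤ ((n:ℕ)+1:ℤ)} = Set.univ := by
          ext x; simp only [Set.mem_setOf_eq, Set.mem_univ, iff_true]
          push_cast; omega
        rw [this, hm.univ]
      rw [Finset.sum_congr rfl this]
      simp [Nat.card_Icc]
    rw [this, div_self (by positivity)]
  have h1 : Filter.Tendsto (ISeq m (fun _ : X => (1:ℝ))) UF (nhds 1) := by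
    rw [funext hseq]
    exact tendsto_const_nhds
  exact tendsto_nhds_unique (hm.fmean_tendsto _) h1

end IsFAMeasure
end Mean
section MeanAdd
open Filter
variable {X : Type*} {m : Set X → ℝ} (hm : IsFAMeasure m)
include hm

lemma IsFAMeasure.ISeq_add_error (f g : X → ℝ) (n : ℕ)
    (hf0 : ∀ x, 0 ≤ f x) (hg0 : ∀ x, 0 ≤ g x) (hfg1 : ∀ x, f x + g x ≤ 1) :
    ∃ c : ℝ, 0 ≤ c ∧ c ≤ 1/((n:ℝ)+1) ∧
      ISeq m (fun x => f x + g x) n = ISeq m f n + ISeq m g n + c := by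
  classical
  set d : ℝ := (n:ℝ)+1 with hd
  have hdpos : (0:ℝ) < d := by positivity
  set u : X → ℤ := fun x => ⌊d * f x⌋ with hu
  set v : X → ℤ := fun x => ⌊d * g x⌋ with hv
  set w : X → ℤ := fun x => ⌊d * (f x + g x)⌋ with hw
  have hf1 : ∀ x, f x ≤ 1 := fun x => by have := hfg1 x; have := hg0 x; linarith
  have hg1 : ∀ x, g x ≤ 1 := fun x => by have := hfg1 x; have := hf0 x; linarith
  have hu0 : ∀ x, 0 ≤ u x := fun x => Int.floor_nonneg.mpr (mul_nonneg hdpos.le (hf0 x))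
  have hv0 : ∀ x, 0 ≤ v x := fun x => Int.floor_nonneg.mpr (mul_nonneg hdpos.le (hg0 x))
  have hbnd : ∀ y : ℝ, y ≤ 1 → ⌊d * y⌋ ≤ ((n+1 : ℕ) : ℤ) := by
    intro y hy1
    rw [show ((n+1:ℕ):ℤ) = ⌊((n+1:ℕ):ℝ)⌋ by rw [Int.floor_natCast]]
    apply Int.floor_le_floor
    push_cast
    nlinarith
  have huN : ∀ x, u x ≤ ((n+1:ℕ):ℤ) := fun x => hbnd _ (hf1 x)
  have hvN : ∀ x, v x ≤ ((n+1:ℕ):ℤ) := fun x => hbnd _ (hg1 x)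
  have hwN : ∀ x, w x ≤ ((n+1:ℕ):ℤ) := fun x => hbnd _ (hfg1 x)
  have hw0 : ∀ x, 0 ≤ w x := fun x =>
    Int.floor_nonneg.mpr (mul_nonneg hdpos.le (add_nonneg (hf0 x) (hg0 x)))
  -- the error term is an indicator
  have hsplit : ∀ x, u x + v x ≤ w x ∧ w x ≤ u x + v x + 1 := by
    intro x
    constructor
    · rw [hu, hv, hw]
      refine Int.le_floor.mpr ?_
      push_cast
      have := Int.floor_le (d * f x)
      have := Int.floor_le (d * g x)
      nlinarith [hdpos]
    · have h1 : d * (f x + g x) < (u x : ℝ) + (v x : ℝ) + 2 := by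
        have := Int.lt_floor_add_one (d * f x)
        have := Int.lt_floor_add_one (d * g x)
        rw [hu, hv]
        push_cast
        nlinarith [hdpos]
      have h2 : w x < u x + v x + 2 :=
        Int.floor_lt.mpr (by push_cast; linarith : d * (f x + g x) < ((u x + v x + 2 : ℤ) : ℝ))
      omega
  set E : Set X := {x | w x = u x + v x + 1} with hE
  have hwdecomp : w = fun x => (u x + v x) + (if x ∈ E then 1 else 0) := by
    funext x
    have := hsplit x
    by_cases hx : x ∈ E
    · simp only [hx, if_true]; exact hx
    · simp only [hx, if_false]
      have : w x ≠ u x + v x + 1 := hx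
      omega
  have huvN : ∀ x, u x + v x ≤ (((n+1) + (n+1) : ℕ):ℤ) := by
    intro x; have := huN x; have := hvN x; push_cast at *; omega
  have key : Jint m ((n+1) + (n+1) + 1) w
      = Jint m (n+1) u + Jint m (n+1) v + m E := by
    rw [hwdecomp]
    rw [hm.Jint_add_indicator ((n+1)+(n+1)) (fun x => u x + v x)
      (fun x => add_nonneg (hu0 x) (hv0 x)) huvN E]
    rw [hm.Jint_add (n+1) (n+1) u v hu0 huN hv0 hvN]
  have hcongr : Jint m ((n+1) + (n+1) + 1) w = Jint m (n+1) w :=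
    hm.Jint_congr w hwN (by omega)
  refine ⟨m E / d, div_nonneg (hm.nonneg E) hdpos.le, ?_, ?_⟩
  · rw [hd]
    gcongr
    exact hm.le_one E
  · unfold ISeq
    rw [← hd, ← hu, ← hv, ← hw, ← hcongr, key]
    ring

end MeanAdd
section ProdAmenable
open Filter

variable {X : Type*} {m : Set X → ℝ} (hm : IsFAMeasure m)
include hm

lemma IsFAMeasure.fmean_add (f g : X → ℝ)
    (hf0 : ∀ x, 0 ≤ f x) (hg0 : ∀ x, 0 ≤ g x) (hfg1 : ∀ x, f x + g x ≤ 1) :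
    fmean m (fun x => f x + g x) = fmean m f + fmean m g := by
  choose c hc0 hc1 hceq using fun n => hm.ISeq_add_error f g n hf0 hg0 hfg1
  have herr : Tendsto c atTop (nhds 0) :=
    squeeze_zero hc0 hc1 tendsto_one_div_add_atTop_nhds_zero_nat
  have h2 : Tendsto (fun n => ISeq m f n + ISeq m g n + c n) UF
      (nhds (fmean m f + fmean m g + 0)) :=
    ((hm.fmean_tendsto f).add (hm.fmean_tendsto g)).add (herr.mono_left UF_le_atTop)
  rw [add_zero] at h2
  have h1 : Tendsto (ISeq m (fun x => f x + g x)) UF (nhds (fmean m f + fmean m g)) := by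
    have he : ISeq m (fun x => f x + g x) = fun n => ISeq m f n + ISeq m g n + c n :=
      funext hceq
    rw [he]; exact h2
  exact tendsto_nhds_unique (hm.fmean_tendsto _) h1

lemma IsFAMeasure.fmean_comp (τ : X → X) (hτ : ∀ S : Set X, m (τ ⁻¹' S) = m S) (f : X → ℝ) :
    fmean m (fun x => f (τ x)) = fmean m f := by
  have he : ISeq m (fun x => f (τ x)) = ISeq m f := by
    funext n
    unfold ISeq Jint
    congr 1
    refine Finset.sum_congr rfl fun k _ => ?_
    exact hτ {x | (k:ℤ) ≤ ⌊((n:ℝ)+1) * f x⌋}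
  unfold fmean
  rw [he]

end ProdAmenable

section Closures

/-- Left-translation invariance in preimage form. -/
lemma minv_preimage {G : Type*} [Group G] {m : Set G → ℝ}
    (hi : ∀ (g : G) (A : Set G), m ((g * ·) '' A) = m A) (g : G) (A : Set G) :
    m ((g * ·) ⁻¹' A) = m A := by
  have h := Set.image_mul_left (a := g⁻¹) (t := A)
  rw [inv_inv] at h
  rw [← h]
  exact hi g⁻¹ A

theorem IsAmenable.prod {G H : Type*} [Group G] [Group H]
    (hG : IsAmenable G) (hH : IsAmenable H) : IsAmenable (G × H) := by
  obtain ⟨m1, hm1u, hm1n, hm1a, hm1i⟩ := hG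
  obtain ⟨m2, hm2u, hm2n, hm2a, hm2i⟩ := hH
  have hm1 : IsFAMeasure m1 := ⟨hm1u, hm1n, hm1a⟩
  have hm2 : IsFAMeasure m2 := ⟨hm2u, hm2n, hm2a⟩
  set F : Set (G × H) → H → ℝ := fun A h => m1 {g | (g, h) ∈ A} with hF
  refine ⟨fun A => fmean m2 (F A), ?_, ?_, ?_, ?_⟩
  · show fmean m2 (F Set.univ) = 1
    have : F Set.univ = fun _ => 1 := by
      funext h
      simp only [hF, Set.mem_univ, Set.setOf_true, hm1u]
    rw [this, hm2.fmean_one]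
  · exact fun A => hm2.fmean_nonneg (F A)
  · intro A B hd
    show fmean m2 (F (A ∪ B)) = fmean m2 (F A) + fmean m2 (F B)
    have hsplit : F (A ∪ B) = fun h => F A h + F B h := by
      funext h
      have : {g | (g, h) ∈ A ∪ B} = {g | (g, h) ∈ A} ∪ {g | (g, h) ∈ B} := rfl
      rw [hF]
      simp only
      rw [this, hm1.add]
      exact Set.disjoint_left.mpr fun g hgA hgB =>
        Set.disjoint_left.mp hd hgA hgB
    rw [hsplit]
    exact hm2.fmean_add _ _ (fun h => hm1.nonneg _) (fun h => hm1.nonneg _)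
      (fun h => by
        have : F A h + F B h = F (A ∪ B) h := by rw [hsplit]
        rw [this]
        exact hm1.le_one _)
  · rintro ⟨g₀, h₀⟩ A
    show fmean m2 (F (((g₀, h₀) * ·) '' A)) = fmean m2 (F A)
    have hsec : F (((g₀, h₀) * ·) '' A) = fun h => F A (h₀⁻¹ * h) := by
      funext h
      have e1 : {g | (g, h) ∈ ((g₀, h₀) * ·) '' A}
          = (g₀⁻¹ * ·) ⁻¹' {g | (g, h₀⁻¹ * h) ∈ A} := by
        ext g
        simp only [Set.image_mul_left, Set.mem_setOf_eq, Set.mem_preimage]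
        rfl
      simp only [hF]
      rw [e1, minv_preimage hm1i]
    rw [hsec]
    exact hm2.fmean_comp (h₀⁻¹ * ·) (fun S => minv_preimage hm2i h₀⁻¹ S) (F A)

end Closures
section MoreClosures

theorem IsAmenable.of_finite {G : Type*} [Group G] [Finite G] : IsAmenable G := by
  have hcard : (Nat.card G : ℝ) ≠ 0 := by
    exact_mod_cast Nat.card_ne_zero.mpr ⟨⟨1⟩, inferInstance⟩
  refine ⟨fun A => (A.ncard : ℝ) / (Nat.card G : ℝ), ?_, ?_, ?_, ?_⟩
  · show ((Set.univ : Set G).ncard : ℝ) / _ = 1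
    rw [Set.ncard_univ]; exact div_self hcard
  · intro A; positivity
  · intro A B hd
    show ((A ∪ B).ncard : ℝ) / _ = (A.ncard : ℝ) / _ + (B.ncard : ℝ) / _
    rw [Set.ncard_union_eq hd (Set.toFinite A) (Set.toFinite B)]
    push_cast; ring
  · intro g A
    show (((g * ·) '' A).ncard : ℝ) / _ = (A.ncard : ℝ) / _
    rw [Set.ncard_image_of_injective A (mul_right_injective g)]

theorem IsAmenable.of_injective {K G : Type*} [Group K] [Group G] (f : K →* G)
    (hf : Function.Injective f) (hG : IsAmenable G) : IsAmenable K := by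
  obtain ⟨m, hu, hn, ha, hi⟩ := hG
  have hm : IsFAMeasure m := ⟨hu, hn, ha⟩
  let s : Setoid G := ⟨fun x y => x * y⁻¹ ∈ f.range,
    ⟨fun x => by simpa using f.range.one_mem, fun {x y} h => by simpa using f.range.inv_mem h,
     fun {x y z} hxy hyz => by simpa [mul_assoc] using f.range.mul_mem hxy hyz⟩⟩
  let ρ : G → G := fun x => (Quotient.mk s x).out
  have hρ : ∀ x, x * (ρ x)⁻¹ ∈ f.range := by
    intro x
    have : ρ x * x⁻¹ ∈ f.range := Quotient.eq.mp ((Quotient.mk s x).out_eq)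
    simpa using f.range.inv_mem this
  have hρeq : ∀ x y, x * y⁻¹ ∈ f.range → ρ x = ρ y := by
    intro x y h
    show (Quotient.mk s x).out = (Quotient.mk s y).out
    rw [Quotient.sound h]
  let T : Set K → Set G := fun A => {g | g * (ρ g)⁻¹ ∈ f '' A}
  refine ⟨fun A => m (T A), ?_, ?_, ?_, ?_⟩
  · have : T Set.univ = Set.univ := by
      ext g
      simp only [T, Set.mem_setOf_eq, Set.image_univ, Set.mem_univ, iff_true]
      exact hρ g
    show m (T Set.univ) = 1
    rw [this, hu]
  · intro A; exact hn _
  · intro A B hd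
    show m (T (A ∪ B)) = m (T A) + m (T B)
    have hun : T (A ∪ B) = T A ∪ T B := by
      ext g
      simp only [T, Set.mem_setOf_eq, Set.image_union, Set.mem_union]
    rw [hun]
    refine hm.add _ _ (Set.disjoint_left.mpr ?_)
    rintro g ⟨a, haA, hae⟩ ⟨b, hbB, hbe⟩
    rw [← hbe] at hae
    obtain rfl := hf hae
    exact Set.disjoint_left.mp hd haA hbB
  · intro k A
    show m (T ((k * ·) '' A)) = m (T A)
    have himg : T ((k * ·) '' A) = (f k * ·) '' (T A) := by
      have h1 : ⇑f '' ((k * ·) '' A) = (f k * ·) '' (⇑f '' A) := by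
        rw [← Set.image_comp, ← Set.image_comp]
        refine Set.image_congr fun a _ => ?_
        simp [map_mul]
      ext x
      have hρx : ρ ((f k)⁻¹ * x) = ρ x := by
        apply hρeq
        simpa using f.range.inv_mem (f.mem_range_self k)
      constructor
      · intro hx
        have hx' : x * (ρ x)⁻¹ ∈ (f k * ·) '' (⇑f '' A) := by
          rw [← h1]; exact hx
        rw [Set.image_mul_left] at hx' ⊢
        simp only [Set.mem_preimage] at hx' ⊢
        show ((f k)⁻¹ * x) * (ρ ((f k)⁻¹ * x))⁻¹ ∈ ⇑f '' A
        rw [hρx, mul_assoc]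
        exact hx'
      · intro hx
        rw [Set.image_mul_left] at hx
        simp only [Set.mem_preimage] at hx
        have hx' : ((f k)⁻¹ * x) * (ρ ((f k)⁻¹ * x))⁻¹ ∈ ⇑f '' A := hx
        rw [hρx, mul_assoc] at hx'
        show x * (ρ x)⁻¹ ∈ ⇑f '' ((k * ·) '' A)
        rw [h1, Set.image_mul_left]
        simpa using hx'
    rw [himg, hi]

theorem IsAmenable.of_finiteIndex {G : Type*} [Group G] (H : Subgroup G) [H.FiniteIndex]
    (hH : IsAmenable H) : IsAmenable G := by
  classical
  obtain ⟨m, hu, hn, ha, hi⟩ := hH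
  have hm : IsFAMeasure m := ⟨hu, hn, ha⟩
  haveI : Fintype (G ⧸ H) := Fintype.ofFinite _
  have hcard : ((Fintype.card (G ⧸ H) : ℝ)) ≠ 0 := by
    exact_mod_cast Fintype.card_ne_zero
  let σ : G ⧸ H → G := Quotient.out
  have hσ : ∀ c : G ⧸ H, QuotientGroup.mk (σ c) = c := fun c => Quotient.out_eq c
  let Φ : Set G → (G ⧸ H) → Set H := fun A c => {h : H | σ c * (h : G) ∈ A}
  refine ⟨fun A => (∑ c : G ⧸ H, m (Φ A c)) / (Fintype.card (G ⧸ H) : ℝ), ?_, ?_, ?_, ?_⟩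
  · have : ∀ c, Φ Set.univ c = Set.univ := fun c => by
      ext h; simp [Φ]
    show (∑ c : G ⧸ H, m (Φ Set.univ c)) / _ = 1
    simp only [this, hu, Finset.sum_const, Finset.card_univ, nsmul_eq_mul, mul_one]
    exact div_self hcard
  · intro A
    exact div_nonneg (Finset.sum_nonneg fun c _ => hn _) (by positivity)
  · intro A B hd
    show (∑ c : G ⧸ H, m (Φ (A ∪ B) c)) / _
      = (∑ c : G ⧸ H, m (Φ A c)) / _ + (∑ c : G ⧸ H, m (Φ B c)) / _
    rw [← add_div]
    congr 1
    rw [← Finset.sum_add_distrib]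
    refine Finset.sum_congr rfl fun c _ => ?_
    have hun : Φ (A ∪ B) c = Φ A c ∪ Φ B c := by
      ext h; simp only [Φ, Set.mem_setOf_eq, Set.mem_union]
    rw [hun]
    refine hm.add _ _ (Set.disjoint_left.mpr fun h hA hB => ?_)
    exact Set.disjoint_left.mp hd hA hB
  · intro g A
    show (∑ c : G ⧸ H, m (Φ ((g * ·) '' A) c)) / _ = (∑ c : G ⧸ H, m (Φ A c)) / _
    congr 1
    have key : ∀ c : G ⧸ H, m (Φ ((g * ·) '' A) c) = m (Φ A (g⁻¹ • c)) := by
      intro c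
      have hmk : QuotientGroup.mk (g⁻¹ * σ c) = g⁻¹ • c := by
        have h2 := MulAction.Quotient.smul_mk H g⁻¹ (σ c)
        rw [hσ] at h2
        rw [h2]
        rfl
      have hmem : (σ (g⁻¹ • c))⁻¹ * (g⁻¹ * σ c) ∈ H := by
        rw [← QuotientGroup.eq, hσ, hmk]
      set k : H := ⟨(σ (g⁻¹ • c))⁻¹ * (g⁻¹ * σ c), hmem⟩ with hk
      have hσc : g⁻¹ * σ c = σ (g⁻¹ • c) * (k : G) := by
        rw [hk]
        group
      have hset : Φ ((g * ·) '' A) c = (fun h : H => k * h) ⁻¹' (Φ A (g⁻¹ • c)) := by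
        ext h
        have hcoe : σ (g⁻¹ • c) * ((k * h : H) : G) = g⁻¹ * (σ c * (h : G)) := by
          push_cast
          rw [← mul_assoc, ← hσc, mul_assoc]
        constructor
        · intro hmem'
          have hh : σ c * (h:G) ∈ (g * ·) '' A := hmem'
          rw [Set.image_mul_left] at hh
          show σ (g⁻¹ • c) * ((k * h : H) : G) ∈ A
          rw [hcoe]
          exact hh
        · intro hmem'
          have hh : σ (g⁻¹ • c) * ((k * h : H) : G) ∈ A := hmem'
          rw [hcoe] at hh
          show σ c * (h:G) ∈ (g * ·) '' A
          rw [Set.image_mul_left]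
          exact hh
      rw [hset, minv_preimage hi]
    rw [Finset.sum_congr rfl fun c _ => key c]
    exact Fintype.sum_equiv (MulAction.toPerm (g⁻¹ : G)) _ _ fun c => rfl

theorem IsAmenable.pi {ι : Type} [Finite ι] {Q : Type} [Group Q] (hQ : IsAmenable Q) :
    IsAmenable (ι → Q) := by
  refine Finite.induction_empty_option (P := fun ι => IsAmenable (ι → Q)) ?_ ?_ ?_ ι
  · intro α β e ih
    exact IsAmenable.of_injective (MulEquiv.arrowCongr e.symm (MulEquiv.refl Q)).toMonoidHom
      (MulEquiv.arrowCongr e.symm (MulEquiv.refl Q)).injective ih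
  · haveI : Subsingleton (PEmpty → Q) := ⟨fun f g => funext fun x => x.elim⟩
    haveI : Finite (PEmpty → Q) := Finite.of_subsingleton
    exact IsAmenable.of_finite
  · intro α _ ih
    let e : (Option α → Q) ≃* Q × (α → Q) :=
      { Equiv.piOptionEquivProd (β := fun _ : Option α => Q) with
        map_mul' := fun f g => rfl }
    exact IsAmenable.of_injective e.toMonoidHom e.injective (IsAmenable.prod hQ ih)

end MoreClosures
section Main

/-- Residual amenability passes to subgroups. -/
lemma Residually.of_le {G : Type} [Group G] {K H : Subgroup G} (hKH : K ≤ H)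
    (hH : Residually amenableClass H) : Residually amenableClass K := by
  intro k hk
  have hk' : Subgroup.inclusion hKH k ≠ 1 := by
    intro h
    exact hk (by simpa using Subgroup.inclusion_injective hKH (h.trans (map_one _).symm))
  obtain ⟨Q, φ, hsurj, hQ, hne⟩ := hH (Subgroup.inclusion hKH k) hk'
  let ψ : ↥K →* ↥Q := φ.comp (Subgroup.inclusion hKH)
  refine ⟨GrpCat.of ψ.range, ψ.rangeRestrict, ψ.rangeRestrict_surjective, ?_, ?_⟩
  · exact IsAmenable.of_injective ψ.range.subtype ψ.range.subtype_injective hQ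
  · intro h
    apply hne
    show ψ k = 1
    have h2 := congrArg (ψ.range.subtype) h
    simpa using h2

theorem residuallyAmenable_of_virtually_residuallyAmenable'
    (G : Type) [Group G] (H : Subgroup G) (hfi : H.FiniteIndex)
    (hH : Residually amenableClass H) :
    Residually amenableClass G := by
  haveI := hfi
  let N : Subgroup G := H.normalCore
  haveI hNfi : N.FiniteIndex := Subgroup.finiteIndex_normalCore (H := H)
  haveI hNnormal : N.Normal := Subgroup.normalCore_normal H
  have hN : Residually amenableClass N := Residually.of_le H.normalCore_le hH
  intro g hg
  by_cases hgN : g ∈ N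
  · -- main case
    have hg' : (⟨g, hgN⟩ : ↥N) ≠ 1 := fun h => hg (by simpa using congrArg Subtype.val h)
    obtain ⟨Q, φ, hsurj, hQ, hne⟩ := hN ⟨g, hgN⟩ hg'
    let K : Subgroup ↥N := φ.ker
    let K' : Subgroup G := K.map N.subtype
    have hK'N : K' ≤ N := by
      rintro x ⟨k, hk, rfl⟩
      exact k.2
    have hmemK' : ∀ e : ↥N, ((e : G) ∈ K' ↔ e ∈ K) := by
      intro e
      constructor
      · rintro ⟨k, hk, hke⟩
        have : k = e := Subtype.ext hke
        rwa [← this]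
      · intro h
        exact ⟨e, h, rfl⟩
    have hconj : ∀ n ∈ N, ∀ y ∈ K', n * y * n⁻¹ ∈ K' := by
      rintro n hn y ⟨k, hk, rfl⟩
      exact ⟨⟨n, hn⟩ * k * ⟨n, hn⟩⁻¹, (MonoidHom.normal_ker φ).conj_mem k hk ⟨n, hn⟩, rfl⟩
    let Λ : Subgroup G := K'.normalCore
    haveI : Λ.Normal := Subgroup.normalCore_normal K'
    have hΛK' : Λ ≤ K' := K'.normalCore_le
    have hΛN : Λ ≤ N := hΛK'.trans hK'N
    have memΛ : ∀ x : G, x ∈ Λ ↔ ∀ b : G, b * x * b⁻¹ ∈ K' := fun x => Iff.rfl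
    have hgΛ : g ∉ Λ := by
      intro h
      exact hne ((hmemK' ⟨g, hgN⟩).mp (hΛK' h))
    -- the diagonal conjugation homomorphism
    let σ : G ⧸ N → G := Quotient.out
    have hσ : ∀ c : G ⧸ N, QuotientGroup.mk (σ c) = c := fun c => Quotient.out_eq c
    let θ : ↥N →* ((G ⧸ N) → ↥Q) :=
      Pi.monoidHom fun c => φ.comp (MulAut.conjNormal ((σ c)⁻¹)).toMonoidHom
    have hconjcoe : ∀ (c : G ⧸ N) (n : ↥N),
        ((MulAut.conjNormal ((σ c)⁻¹) n : ↥N) : G) = (σ c)⁻¹ * (n : G) * σ c := by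
      intro c n
      rw [MulAut.conjNormal_apply, inv_inv]
    have hθker : ∀ n : ↥N, n ∈ θ.ker ↔ ∀ c : G ⧸ N, (σ c)⁻¹ * (n : G) * σ c ∈ K' := by
      intro n
      rw [MonoidHom.mem_ker]
      constructor
      · intro h c
        have hc : θ n c = 1 := congrFun h c
        have : MulAut.conjNormal ((σ c)⁻¹) n ∈ K := MonoidHom.mem_ker.mpr hc
        have := (hmemK' _).mpr this
        rwa [hconjcoe] at this
      · intro h
        funext c
        have : ((MulAut.conjNormal ((σ c)⁻¹) n : ↥N) : G) ∈ K' := by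
          rw [hconjcoe]; exact h c
        exact MonoidHom.mem_ker.mp ((hmemK' _).mp this)
    -- kernels agree
    let π : G →* G ⧸ Λ := QuotientGroup.mk' Λ
    let ψ : ↥N →* G ⧸ Λ := π.comp N.subtype
    have hkereq : ψ.ker = θ.ker := by
      ext n
      rw [hθker]
      have hψ : n ∈ ψ.ker ↔ (n : G) ∈ Λ := by
        rw [MonoidHom.mem_ker]
        show (QuotientGroup.mk' Λ) (n : G) = 1 ↔ _
        rw [← MonoidHom.mem_ker, QuotientGroup.ker_mk']
      rw [hψ, memΛ]
      constructor
      · intro hb c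
        have := hb (σ c)⁻¹
        simpa using this
      · intro hc b
        have hn₀ : b * σ (QuotientGroup.mk b⁻¹) ∈ N := by
          have h1 : QuotientGroup.mk (σ (QuotientGroup.mk b⁻¹)) =
              (QuotientGroup.mk b⁻¹ : G ⧸ N) := hσ _
          rw [QuotientGroup.eq] at h1
          have h3 := N.inv_mem h1
          simpa [mul_assoc] using h3
        set n₀ : G := b * σ (QuotientGroup.mk b⁻¹) with hn₀def
        set c : G ⧸ N := QuotientGroup.mk b⁻¹ with hc'
        have hσc : σ c = b⁻¹ * n₀ := by
          rw [hn₀def]; group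
        have hx := hc c
        rw [hσc] at hx
        have hx' : n₀⁻¹ * (b * (n : G) * b⁻¹) * n₀ ∈ K' := by
          have heq : (b⁻¹ * n₀)⁻¹ * (n : G) * (b⁻¹ * n₀)
              = n₀⁻¹ * (b * (n : G) * b⁻¹) * n₀ := by group
          rwa [heq] at hx
        have h5 := hconj n₀ hn₀ _ hx'
        have heq2 : n₀ * (n₀⁻¹ * (b * (n : G) * b⁻¹) * n₀) * n₀⁻¹
            = b * (n : G) * b⁻¹ := by group
        rwa [heq2] at h5
    -- amenability of G ⧸ Λ
    haveI : Finite (G ⧸ N) := Subgroup.finite_quotient_of_finiteIndex (H := N)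
    have hQam : IsAmenable ↥Q := hQ
    have hPi : IsAmenable ((G ⧸ N) → ↥Q) := IsAmenable.pi hQam
    have h1 : IsAmenable (↥N ⧸ θ.ker) :=
      IsAmenable.of_injective (QuotientGroup.kerLift θ) (QuotientGroup.kerLift_injective θ) hPi
    have h2 : IsAmenable (↥N ⧸ ψ.ker) :=
      IsAmenable.of_injective (QuotientGroup.quotientMulEquivOfEq hkereq).toMonoidHom
        (QuotientGroup.quotientMulEquivOfEq hkereq).injective h1
    have h3 : IsAmenable ψ.range :=
      IsAmenable.of_injective (QuotientGroup.quotientKerEquivRange ψ).symm.toMonoidHom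
        (QuotientGroup.quotientKerEquivRange ψ).symm.injective h2
    have hrange : ψ.range = N.map π := by
      show (π.comp N.subtype).range = N.map π
      rw [MonoidHom.range_comp, Subgroup.range_subtype]
    rw [hrange] at h3
    haveI : (N.map π).FiniteIndex := by
      constructor
      have hsurjπ : Function.Surjective π := QuotientGroup.mk'_surjective Λ
      have hidx := Subgroup.index_comap_of_surjective (N.map π) hsurjπ
      rw [Subgroup.comap_map_eq] at hidx
      have hker : π.ker = Λ := QuotientGroup.ker_mk' Λ
      rw [hker, sup_of_le_left hΛN] at hidx
      rw [← hidx]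
      exact Subgroup.FiniteIndex.index_ne_zero
    have h4 : IsAmenable (G ⧸ Λ) := IsAmenable.of_finiteIndex (N.map π) h3
    refine ⟨GrpCat.of (G ⧸ Λ), π, QuotientGroup.mk'_surjective Λ, h4, ?_⟩
    intro h
    exact hgΛ ((QuotientGroup.eq_one_iff g).mp h)
  · -- g survives in the finite quotient G ⧸ N
    haveI : Finite (G ⧸ N) := Subgroup.finite_quotient_of_finiteIndex (H := N)
    refine ⟨GrpCat.of (G ⧸ N), QuotientGroup.mk' N, QuotientGroup.mk'_surjective N,
      IsAmenable.of_finite (G := G ⧸ N), ?_⟩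
    intro h
    exact hgN ((QuotientGroup.eq_one_iff g).mp h)

end Main

/-- Every virtually residually amenable group is residually amenable: if `G` has a
finite-index subgroup that is residually amenable, then `G` is residually amenable. -/
theorem residuallyAmenable_of_virtually_residuallyAmenable
    (G : Type) [Group G] (H : Subgroup G) (hfi : H.FiniteIndex)
    (hH : Residually amenableClass H) :
    Residually amenableClass G := by
  exact residuallyAmenable_of_virtually_residuallyAmenable' G H hfi hH
end

section
/- Every (residually solvable)-by-amenable group is residually amenable: if N ⊴ G, N is residually solvable, and G/N is amenable, then G is residually amenable. -/
open Set Pointwise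
open scoped Classical
set_option linter.unusedSectionVars false

section Comm

variable {G : Type*} [Group G]

/-- The set of finitely additive probability "means" on `G`. -/
def meansSet (G : Type*) : Set (Set G → ℝ) :=
  {μ | μ Set.univ = 1 ∧ (∀ A, 0 ≤ μ A ∧ μ A ≤ 1) ∧
    ∀ A B : Set G, Disjoint A B → μ (A ∪ B) = μ A + μ B}

/-- Averaging operator. -/
noncomputable def Tavg (g : G) (n : ℕ) (μ : Set G → ℝ) : Set G → ℝ :=
  fun A => (∑ i ∈ Finset.range (n + 1), μ (g ^ i • A)) / (n + 1)

lemma meansSet_isClosed : IsClosed (meansSet G) := by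
  have heq : meansSet G = {μ : Set G → ℝ | μ Set.univ = 1} ∩
      ((⋂ A : Set G, {μ : Set G → ℝ | 0 ≤ μ A ∧ μ A ≤ 1}) ∩
       (⋂ A : Set G, ⋂ B : Set G, ⋂ _ : Disjoint A B,
          {μ : Set G → ℝ | μ (A ∪ B) = μ A + μ B})) := by
    ext μ
    simp only [meansSet, mem_setOf_eq, mem_inter_iff, mem_iInter]
  rw [heq]
  refine (isClosed_eq (continuous_apply _) continuous_const).inter (IsClosed.inter ?_ ?_)
  · exact isClosed_iInter fun A =>
      ((isClosed_le continuous_const (continuous_apply A)).inter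
        (isClosed_le (continuous_apply A) continuous_const))
  · exact isClosed_iInter fun A => isClosed_iInter fun B => isClosed_iInter fun _ =>
      isClosed_eq (continuous_apply _) ((continuous_apply A).add (continuous_apply B))

lemma meansSet_isCompact : IsCompact (meansSet G) := by
  refine IsCompact.of_isClosed_subset (isCompact_univ_pi fun _ : Set G => isCompact_Icc (a := (0:ℝ)) (b := 1)) meansSet_isClosed ?_
  intro μ hμ
  intro A _
  exact ⟨(hμ.2.1 A).1, (hμ.2.1 A).2⟩

lemma dirac_mem_meansSet : (fun A : Set G => if (1:G) ∈ A then (1:ℝ) else 0) ∈ meansSet G := by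
  refine ⟨by simp, fun A => by dsimp only; split <;> norm_num, fun A B hAB => ?_⟩
  by_cases hA : (1:G) ∈ A
  · have hB : (1:G) ∉ B := fun hB => (Set.disjoint_left.mp hAB hA) hB
    simp [hA, hB]
  · by_cases hB : (1:G) ∈ B <;> simp [hA, hB]

lemma Tavg_continuous (g : G) (n : ℕ) : Continuous (Tavg g n) := by
  refine continuous_pi fun A => Continuous.div_const ?_ _
  exact continuous_finset_sum _ fun i _ => continuous_apply _

lemma smul_set_disjoint' (g : G) {A B : Set G} (h : Disjoint A B) :
    Disjoint (g • A) (g • B) := by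
  rw [← Set.image_smul, ← Set.image_smul]
  exact (Set.disjoint_image_iff (MulAction.injective g)).mpr h

lemma Tavg_mem (g : G) (n : ℕ) {μ : Set G → ℝ} (hμ : μ ∈ meansSet G) :
    Tavg g n μ ∈ meansSet G := by
  obtain ⟨h1, hb, hadd⟩ := hμ
  have hn : ((n : ℝ) + 1) ≠ 0 := by positivity
  refine ⟨?_, fun A => ⟨?_, ?_⟩, fun A B hAB => ?_⟩
  · simp only [Tavg, smul_set_univ, h1, Finset.sum_const, Finset.card_range, nsmul_eq_mul,
      mul_one]
    field_simp
    exact Nat.cast_succ n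
  · apply div_nonneg _ (by positivity)
    exact Finset.sum_nonneg fun i _ => (hb _).1
  · simp only [Tavg]
    rw [div_le_one (by positivity)]
    calc ∑ i ∈ Finset.range (n+1), μ (g ^ i • A)
        ≤ ∑ _i ∈ Finset.range (n+1), (1:ℝ) := Finset.sum_le_sum fun i _ => (hb _).2
      _ = (n:ℝ) + 1 := by simp
  · simp only [Tavg, smul_set_union]
    rw [← add_div]
    congr 1
    rw [← Finset.sum_add_distrib]
    exact Finset.sum_congr rfl fun i _ => hadd _ _ (smul_set_disjoint' _ hAB)

lemma Tavg_comm {G : Type*} [CommGroup G] (g h : G) (n k : ℕ) (μ : Set G → ℝ) :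
    Tavg g n (Tavg h k μ) = Tavg h k (Tavg g n μ) := by
  funext A
  simp only [Tavg, ← Finset.sum_div]
  rw [div_div, div_div, mul_comm ((k:ℝ)+1)]
  congr 1
  rw [Finset.sum_comm]
  refine Finset.sum_congr rfl fun j _ => Finset.sum_congr rfl fun i _ => ?_
  rw [smul_smul, smul_smul, mul_comm]

lemma exists_mem_finite_inter {G : Type*} [CommGroup G] (u : Finset (G × ℕ)) :
    ∃ μ ∈ meansSet G, ∀ p ∈ u, μ ∈ Tavg p.1 p.2 '' meansSet G := by
  classical
  induction u using Finset.induction with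
  | empty => exact ⟨_, dirac_mem_meansSet, by simp⟩
  | @insert p u hp IH =>
    obtain ⟨μ, hμ, hall⟩ := IH
    refine ⟨Tavg p.1 p.2 μ, Tavg_mem _ _ hμ, fun q hq => ?_⟩
    rcases Finset.mem_insert.mp hq with rfl | hq
    · exact ⟨μ, hμ, rfl⟩
    · obtain ⟨ν, hν, hνeq⟩ := hall q hq
      exact ⟨Tavg p.1 p.2 ν, Tavg_mem _ _ hν, by rw [Tavg_comm, hνeq]⟩

theorem isAmenable_of_comm (G : Type*) [CommGroup G] : IsAmenable G := by
  classical
  have hne : (meansSet G ∩ ⋂ p : G × ℕ, Tavg p.1 p.2 '' meansSet G).Nonempty := by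
    rw [Set.nonempty_iff_ne_empty]
    intro hcon
    obtain ⟨u, hu⟩ := meansSet_isCompact.elim_finite_subfamily_closed
      (fun p : G × ℕ => Tavg p.1 p.2 '' meansSet G)
      (fun p => (meansSet_isCompact.image (Tavg_continuous p.1 p.2)).isClosed) hcon
    obtain ⟨μ, hμ, hall⟩ := exists_mem_finite_inter u
    exact absurd hu (Set.nonempty_iff_ne_empty.mp ⟨μ, hμ, Set.mem_iInter₂.mpr hall⟩)
  obtain ⟨y, hyX, hy⟩ := hne
  refine ⟨y, hyX.1, fun A => (hyX.2.1 A).1, hyX.2.2, fun g A => ?_⟩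
  have himg : (g * ·) '' A = g • A := rfl
  rw [himg]
  have key : ∀ n : ℕ, |y (g • A) - y A| ≤ 1 / ((n:ℝ) + 1) := by
    intro n
    have hyn : y ∈ Tavg g n '' meansSet G := by
      have := Set.mem_iInter.mp hy (g, n); exact this
    obtain ⟨x, hx, rfl⟩ := hyn
    set f : ℕ → ℝ := fun i => x (g ^ i • A) with hf
    have h1 : Tavg g n x (g • A) = (∑ i ∈ Finset.range (n+1), f (i+1)) / ((n:ℝ)+1) := by
      simp only [Tavg]
      congr 1
      refine Finset.sum_congr rfl fun i _ => ?_
      rw [hf]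
      simp only []
      rw [smul_smul, ← pow_succ]
    have h2 : Tavg g n x A = (∑ i ∈ Finset.range (n+1), f i) / ((n:ℝ)+1) := rfl
    rw [h1, h2, div_sub_div_same]
    have htel : (∑ i ∈ Finset.range (n+1), f (i+1)) - ∑ i ∈ Finset.range (n+1), f i
        = f (n+1) - f 0 := by
      rw [← Finset.sum_sub_distrib, Finset.sum_range_sub (f := f)]
    rw [htel, abs_div, abs_of_pos (show (0:ℝ) < (n:ℝ)+1 by positivity)]
    have hbound : |f (n+1) - f 0| ≤ 1 := by
      rw [abs_le]
      constructor <;> simp only [hf] <;>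
        linarith [(hx.2.1 (g^(n+1) • A)).1, (hx.2.1 (g^(n+1) • A)).2,
          (hx.2.1 (g^0 • A)).1, (hx.2.1 (g^0 • A)).2]
    gcongr
  have hd : |y (g • A) - y A| ≤ 0 := by
    refine ge_of_tendsto' tendsto_one_div_add_atTop_nhds_zero_nat fun n => key n
  have := abs_nonneg (y (g • A) - y A)
  have : y (g • A) - y A = 0 := abs_eq_zero.mp (le_antisymm hd (abs_nonneg _))
  linarith

end Comm


structure FinAddProb (Q : Type*) where
  m : Set Q → ℝ
  huniv : m Set.univ = 1
  hpos : ∀ A, 0 ≤ m A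
  hadd : ∀ A B : Set Q, Disjoint A B → m (A ∪ B) = m A + m B

namespace FinAddProb

variable {Q : Type*} (μ : FinAddProb Q)

lemma hempty : μ.m ∅ = 0 := by
  have := μ.hadd ∅ ∅ (by simp)
  simp only [Set.union_empty] at this
  linarith

lemma mono {A B : Set Q} (h : A ⊆ B) : μ.m A ≤ μ.m B := by
  have hB : B = A ∪ (B \ A) := by rw [Set.union_diff_cancel h]
  rw [hB, μ.hadd _ _ disjoint_sdiff_right]
  linarith [μ.hpos (B \ A)]

lemma le_one (A : Set Q) : μ.m A ≤ 1 := μ.huniv ▸ μ.mono (Set.subset_univ A)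

lemma m_biUnion {ι : Type*} (s : Finset ι) (P : ι → Set Q)
    (hd : (s : Set ι).PairwiseDisjoint P) :
    μ.m (⋃ i ∈ s, P i) = ∑ i ∈ s, μ.m (P i) := by
  classical
  induction s using Finset.induction with
  | empty => simpa using μ.hempty
  | @insert a s ha IH =>
    have hdisj : Disjoint (P a) (⋃ i ∈ s, P i) := by
      refine Set.disjoint_iUnion₂_right.mpr fun i hi => ?_
      exact hd (Finset.mem_insert_self a s) (Finset.mem_insert_of_mem hi)
        (fun h => ha (h ▸ hi))
    rw [Finset.set_biUnion_insert, μ.hadd _ _ hdisj, Finset.sum_insert ha,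
      IH (hd.subset (Finset.coe_subset.mpr (Finset.subset_insert a s)))]

/-- decompose the measure of `A` along a partition of the whole space -/
lemma m_eq_sum_inter {ι : Type*} (s : Finset ι) (P : ι → Set Q)
    (hd : (s : Set ι).PairwiseDisjoint P) (hcov : ∀ q : Q, ∃ i ∈ s, q ∈ P i)
    (A : Set Q) : μ.m A = ∑ i ∈ s, μ.m (A ∩ P i) := by
  have hA : A = ⋃ i ∈ s, (A ∩ P i) := by
    ext q
    simp only [Set.mem_iUnion, Set.mem_inter_iff]
    constructor
    · intro hq
      obtain ⟨i, hi, hqi⟩ := hcov q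
      exact ⟨i, hi, hq, hqi⟩
    · rintro ⟨i, hi, hq, _⟩; exact hq
  rw [show μ.m A = μ.m (⋃ i ∈ s, (A ∩ P i)) from by rw [← hA]]
  apply μ.m_biUnion
  intro i hi j hj hij
  refine Set.disjoint_left.mpr fun q hq hq' => ?_
  exact Set.disjoint_left.mp (hd hi hj hij) (Set.mem_of_mem_inter_right hq)
    (Set.mem_of_mem_inter_right hq')

/-- the workhorse comparison lemma between two partitions -/
lemma sum_le_sum_partitions {ι κ : Type*} (s : Finset ι) (t : Finset κ)
    (P : ι → Set Q) (R : κ → Set Q) (c : ι → ℝ) (d : κ → ℝ)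
    (hdP : (s : Set ι).PairwiseDisjoint P) (hcovP : ∀ q : Q, ∃ i ∈ s, q ∈ P i)
    (hdR : (t : Set κ).PairwiseDisjoint R) (hcovR : ∀ q : Q, ∃ k ∈ t, q ∈ R k)
    (hcd : ∀ i ∈ s, ∀ k ∈ t, (P i ∩ R k).Nonempty → c i ≤ d k) :
    ∑ i ∈ s, c i * μ.m (P i) ≤ ∑ k ∈ t, d k * μ.m (R k) := by
  have lhs_eq : ∑ i ∈ s, c i * μ.m (P i)
      = ∑ i ∈ s, ∑ k ∈ t, c i * μ.m (P i ∩ R k) := by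
    refine Finset.sum_congr rfl fun i _ => ?_
    rw [μ.m_eq_sum_inter t R hdR hcovR (P i), Finset.mul_sum]
  have rhs_eq : ∑ k ∈ t, d k * μ.m (R k)
      = ∑ k ∈ t, ∑ i ∈ s, d k * μ.m (P i ∩ R k) := by
    refine Finset.sum_congr rfl fun k _ => ?_
    rw [μ.m_eq_sum_inter s P hdP hcovP (R k), Finset.mul_sum]
    refine Finset.sum_congr rfl fun i _ => by rw [Set.inter_comm]
  rw [lhs_eq, rhs_eq, Finset.sum_comm (s := s) (t := t)]
  refine Finset.sum_le_sum fun k hk => Finset.sum_le_sum fun i hi => ?_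
  by_cases hne : (P i ∩ R k).Nonempty
  · exact mul_le_mul_of_nonneg_right (hcd i hi k hk hne) (μ.hpos _)
  · rw [Set.not_nonempty_iff_eq_empty] at hne
    rw [hne, μ.hempty, mul_zero, mul_zero]

end FinAddProb

section Integ

variable {Q : Type*} (μ : FinAddProb Q)

/-- level set partition at dyadic resolution -/
def lpart (u : Q → ℝ) (n : ℕ) (j : ℕ) : Set Q := {q | ⌊u q * 2 ^ n⌋₊ = j}

lemma lpart_disj (u : Q → ℝ) (n : ℕ) :
    ((Finset.range (2 ^ n + 1) : Finset ℕ) : Set ℕ).PairwiseDisjoint (lpart u n) :=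
  fun i _ j _ hij => Set.disjoint_left.mpr fun q hq hq' => hij (hq.symm.trans hq')

lemma lpart_cov (u : Q → ℝ) (n : ℕ) (hu1 : ∀ q, u q ≤ 1) :
    ∀ q : Q, ∃ j ∈ Finset.range (2 ^ n + 1), q ∈ lpart u n j := by
  intro q
  refine ⟨⌊u q * 2 ^ n⌋₊, ?_, rfl⟩
  rw [Finset.mem_range, Nat.lt_succ_iff]
  calc ⌊u q * 2 ^ n⌋₊ ≤ ⌊(1 : ℝ) * 2 ^ n⌋₊ := by
        apply Nat.floor_le_floor
        apply mul_le_mul_of_nonneg_right (hu1 q) (by positivity)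
    _ = 2 ^ n := by rw [one_mul]; exact_mod_cast Nat.floor_natCast (R := ℝ) (2 ^ n)

/-- lower dyadic sum -/
noncomputable def Ln (n : ℕ) (u : Q → ℝ) : ℝ :=
  ∑ j ∈ Finset.range (2 ^ n + 1), (j : ℝ) / 2 ^ n * μ.m (lpart u n j)

lemma Ln_nonneg (n : ℕ) (u : Q → ℝ) : 0 ≤ Ln μ n u :=
  Finset.sum_nonneg fun j _ => mul_nonneg (by positivity) (μ.hpos _)

lemma Ln_le_one (n : ℕ) (u : Q → ℝ) (hu1 : ∀ q, u q ≤ 1) : Ln μ n u ≤ 1 := by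
  have h : Ln μ n u ≤ ∑ j ∈ Finset.range (2 ^ n + 1), μ.m (lpart u n j) := by
    refine Finset.sum_le_sum fun j hj => ?_
    have hj' : (j : ℝ) / 2 ^ n ≤ 1 := by
      rw [div_le_one (by positivity)]
      exact_mod_cast Nat.lt_succ_iff.mp (Finset.mem_range.mp hj)
    nlinarith [μ.hpos (lpart u n j)]
  refine h.trans ?_
  have := μ.m_eq_sum_inter (Finset.range (2 ^ n + 1)) (lpart u n)
    (lpart_disj u n) (lpart_cov u n hu1) Set.univ
  rw [μ.huniv] at this
  rw [show ∑ j ∈ Finset.range (2^n+1), μ.m (lpart u n j)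
      = ∑ j ∈ Finset.range (2^n+1), μ.m (Set.univ ∩ lpart u n j) from
    Finset.sum_congr rfl fun j _ => by rw [Set.univ_inter], ← this]

lemma Ln_mono_succ (n : ℕ) (u : Q → ℝ) (hu0 : ∀ q, 0 ≤ u q) (hu1 : ∀ q, u q ≤ 1) :
    Ln μ n u ≤ Ln μ (n + 1) u := by
  refine μ.sum_le_sum_partitions _ _ _ _ _ _ (lpart_disj u n) (lpart_cov u n hu1)
    (lpart_disj u (n+1)) (lpart_cov u (n+1) hu1) ?_
  rintro j _ k _ ⟨q, hqj, hqk⟩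
  simp only [lpart, Set.mem_setOf_eq] at hqj hqk
  have h1 : (j : ℝ) ≤ u q * 2 ^ n := hqj ▸ Nat.floor_le (by have := hu0 q; positivity)
  have hps : (2:ℝ)^(n+1) = 2^n * 2 := pow_succ 2 n
  have hps2 : u q * 2 ^ (n+1) = (u q * 2 ^ n) * 2 := by rw [pow_succ]; ring
  have h2 : 2 * j ≤ k := by
    rw [← hqk]
    refine Nat.le_floor ?_
    push_cast
    rw [hps2]
    linarith
  have h2' : (2:ℝ) * j ≤ k := by exact_mod_cast h2
  rw [div_le_div_iff₀ (by positivity) (by positivity)]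
  push_cast
  have hj2 : (j:ℝ) * 2 ^ (n+1) = (2 * j) * 2 ^ n := by rw [pow_succ]; ring
  rw [hj2]
  have := pow_pos (show (0:ℝ) < 2 by norm_num) n
  nlinarith

noncomputable def Integ (u : Q → ℝ) : ℝ := ⨆ n : ℕ, Ln μ n u

lemma Ln_tendsto (u : Q → ℝ) (hu0 : ∀ q, 0 ≤ u q) (hu1 : ∀ q, u q ≤ 1) :
    Filter.Tendsto (fun n => Ln μ n u) Filter.atTop (nhds (Integ μ u)) := by
  apply tendsto_atTop_ciSup
  · exact monotone_nat_of_le_succ fun n => Ln_mono_succ μ n u hu0 hu1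
  · exact ⟨1, fun x ⟨n, hn⟩ => hn ▸ Ln_le_one μ n u hu1⟩

lemma Integ_nonneg (u : Q → ℝ) (hu0 : ∀ q, 0 ≤ u q) (hu1 : ∀ q, u q ≤ 1) :
    0 ≤ Integ μ u :=
  le_of_tendsto_of_tendsto' tendsto_const_nhds (Ln_tendsto μ u hu0 hu1)
    fun n => Ln_nonneg μ n u

lemma Integ_one (u : Q → ℝ) (hu : ∀ q, u q = 1) : Integ μ u = 1 := by
  have hLn : ∀ n, Ln μ n u = 1 := by
    intro n
    have hfl : ∀ q, ⌊u q * 2 ^ n⌋₊ = 2 ^ n := by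
      intro q
      rw [hu q, one_mul]
      exact_mod_cast Nat.floor_natCast (R := ℝ) (2 ^ n)
    rw [Ln, Finset.sum_eq_single (2 ^ n)]
    · have : lpart u n (2 ^ n) = Set.univ := by
        ext q; simp [lpart, hfl q]
      rw [this, μ.huniv, mul_one]
      push_cast
      exact div_self (by positivity)
    · intro j _ hj
      have : lpart u n j = ∅ := by
        ext q; simp only [lpart, Set.mem_setOf_eq, Set.mem_empty_iff_false, iff_false]
        rw [hfl q]; exact fun h => hj h.symm
      rw [this, μ.hempty, mul_zero]
    · intro h; exact absurd (Finset.self_mem_range_succ (2 ^ n)) h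
  rw [Integ]
  rw [show (fun n => Ln μ n u) = fun _ => (1:ℝ) from funext hLn]
  exact ciSup_const

lemma Integ_comp (u : Q → ℝ) (τ : Q → Q) (hτ : ∀ A : Set Q, μ.m (τ ⁻¹' A) = μ.m A) :
    Integ μ (u ∘ τ) = Integ μ u := by
  unfold Integ
  congr 1
  funext n
  unfold Ln
  refine Finset.sum_congr rfl fun j _ => ?_
  congr 1
  rw [show lpart (u ∘ τ) n j = τ ⁻¹' (lpart u n j) from rfl, hτ]

lemma Integ_add (u v : Q → ℝ) (hu0 : ∀ q, 0 ≤ u q) (hv0 : ∀ q, 0 ≤ v q)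
    (huv1 : ∀ q, u q + v q ≤ 1) :
    Integ μ (fun q => u q + v q) = Integ μ u + Integ μ v := by
  have hu1 : ∀ q, u q ≤ 1 := fun q => by linarith [hv0 q, huv1 q]
  have hv1 : ∀ q, v q ≤ 1 := fun q => by linarith [hu0 q, huv1 q]
  have hw0 : ∀ q, 0 ≤ u q + v q := fun q => by linarith [hu0 q, hv0 q]
  set w : Q → ℝ := fun q => u q + v q with hw
  -- the pair partition
  have key : ∀ n : ℕ, Ln μ n u + Ln μ n v ≤ Ln μ n w ∧
      Ln μ n w ≤ Ln μ n u + Ln μ n v + 1 / 2 ^ n := by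
    intro n
    classical
    set s2 : Finset (ℕ × ℕ) :=
      (Finset.range (2^n+1)) ×ˢ (Finset.range (2^n+1)) with hs2
    set P2 : ℕ × ℕ → Set Q := fun p => lpart u n p.1 ∩ lpart v n p.2 with hP2
    have hd2 : (s2 : Set (ℕ × ℕ)).PairwiseDisjoint P2 := by
      intro p _ p' _ hpp'
      refine Set.disjoint_left.mpr fun q hq hq' => hpp' ?_
      have h1 : p.1 = p'.1 := hq.1.symm.trans hq'.1
      have h2 : p.2 = p'.2 := hq.2.symm.trans hq'.2
      exact Prod.ext h1 h2
    have hcov2 : ∀ q : Q, ∃ p ∈ s2, q ∈ P2 p := by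
      intro q
      obtain ⟨j, hj, hqj⟩ := lpart_cov u n hu1 q
      obtain ⟨k, hk, hqk⟩ := lpart_cov v n hv1 q
      exact ⟨(j, k), Finset.mem_product.mpr ⟨hj, hk⟩, hqj, hqk⟩
    -- sum over pair partition equals Ln u + Ln v
    have hsum : ∀ (c : ℕ → ℝ), ∑ p ∈ s2, c p.1 * μ.m (P2 p)
        = ∑ j ∈ Finset.range (2^n+1), c j * μ.m (lpart u n j) := by
      intro c
      rw [hs2, Finset.sum_product]
      refine Finset.sum_congr rfl fun j _ => ?_
      calc ∑ y ∈ Finset.range (2^n+1), c (j, y).1 * μ.m (P2 (j, y))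
          = ∑ y ∈ Finset.range (2^n+1), c j * μ.m (lpart u n j ∩ lpart v n y) := rfl
        _ = c j * ∑ y ∈ Finset.range (2^n+1), μ.m (lpart u n j ∩ lpart v n y) := by
            rw [← Finset.mul_sum]
        _ = c j * μ.m (lpart u n j) := by
            rw [← μ.m_eq_sum_inter (Finset.range (2^n+1)) (lpart v n)
              (lpart_disj v n) (lpart_cov v n hv1) (lpart u n j)]
    have hsum2 : ∀ (c : ℕ → ℝ), ∑ p ∈ s2, c p.2 * μ.m (P2 p)
        = ∑ k ∈ Finset.range (2^n+1), c k * μ.m (lpart v n k) := by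
      intro c
      rw [hs2, Finset.sum_product_right]
      refine Finset.sum_congr rfl fun k _ => ?_
      calc ∑ x ∈ Finset.range (2^n+1), c (x, k).2 * μ.m (P2 (x, k))
          = ∑ x ∈ Finset.range (2^n+1), c k * μ.m (lpart v n k ∩ lpart u n x) := by
            refine Finset.sum_congr rfl fun x _ => ?_
            rw [show P2 (x, k) = lpart u n x ∩ lpart v n k from rfl, Set.inter_comm]
        _ = c k * ∑ x ∈ Finset.range (2^n+1), μ.m (lpart v n k ∩ lpart u n x) := by
            rw [← Finset.mul_sum]
        _ = c k * μ.m (lpart v n k) := by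
            rw [← μ.m_eq_sum_inter (Finset.range (2^n+1)) (lpart u n)
              (lpart_disj u n) (lpart_cov u n hu1) (lpart v n k)]
    have hpairsum : ∑ p ∈ s2, ((p.1 : ℝ) + p.2) / 2 ^ n * μ.m (P2 p)
        = Ln μ n u + Ln μ n v := by
      have : ∀ p : ℕ × ℕ, ((p.1 : ℝ) + p.2) / 2 ^ n * μ.m (P2 p)
          = (p.1 : ℝ) / 2^n * μ.m (P2 p) + (p.2 : ℝ) / 2^n * μ.m (P2 p) := by
        intro p; ring
      rw [Finset.sum_congr rfl fun p _ => this p, Finset.sum_add_distrib,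
        hsum (fun j => (j:ℝ)/2^n), hsum2 (fun k => (k:ℝ)/2^n)]
      rfl
    have htotal : ∑ p ∈ s2, μ.m (P2 p) = 1 := by
      have := μ.m_eq_sum_inter s2 P2 hd2 hcov2 Set.univ
      rw [μ.huniv] at this
      rw [show ∑ p ∈ s2, μ.m (P2 p) = ∑ p ∈ s2, μ.m (Set.univ ∩ P2 p) from
        Finset.sum_congr rfl fun p _ => by rw [Set.univ_inter], ← this]
    constructor
    · rw [← hpairsum]
      refine μ.sum_le_sum_partitions s2 _ P2 (lpart w n) _ _ hd2 hcov2
        (lpart_disj w n) (lpart_cov w n huv1) ?_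
      rintro p _ l _ ⟨q, ⟨hqj, hqk⟩, hql⟩
      simp only [lpart, Set.mem_setOf_eq] at hqj hqk hql
      have h1 : (p.1 : ℝ) ≤ u q * 2 ^ n := hqj ▸ Nat.floor_le (by have := hu0 q; positivity)
      have h2 : (p.2 : ℝ) ≤ v q * 2 ^ n := hqk ▸ Nat.floor_le (by have := hv0 q; positivity)
      have h3 : ((p.1 + p.2 : ℕ) : ℝ) ≤ w q * 2 ^ n := by
        push_cast
        have hwq : w q * 2 ^ n = (u q + v q) * 2 ^ n := rfl
        rw [hwq]
        nlinarith
      have h4 : p.1 + p.2 ≤ l := hql ▸ Nat.le_floor h3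
      rw [div_le_div_iff₀ (by positivity) (by positivity)]
      have : ((p.1 : ℝ) + p.2) ≤ (l : ℝ) := by exact_mod_cast h4
      nlinarith [pow_pos (show (0:ℝ) < 2 by norm_num) n]
    · have step : Ln μ n w ≤ ∑ p ∈ s2, (((p.1 : ℝ) + p.2) / 2 ^ n + 1/2^n) * μ.m (P2 p) := by
        refine μ.sum_le_sum_partitions _ s2 (lpart w n) P2 _ _
          (lpart_disj w n) (lpart_cov w n huv1) hd2 hcov2 ?_
        rintro l _ p _ ⟨q, hql, hqj, hqk⟩
        simp only [lpart, Set.mem_setOf_eq] at hqj hqk hql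
        have h1 : u q * 2 ^ n < (p.1 : ℝ) + 1 := by
          rw [← hqj]; exact Nat.lt_floor_add_one _
        have h2 : v q * 2 ^ n < (p.2 : ℝ) + 1 := by
          rw [← hqk]; exact Nat.lt_floor_add_one _
        have h3 : l ≤ p.1 + p.2 + 1 := by
          rw [← hql, ← Nat.lt_succ_iff]
          rw [Nat.floor_lt (by have := hw0 q; positivity)]
          push_cast
          have hwq : w q * 2 ^ n = (u q + v q) * 2 ^ n := rfl
          rw [hwq]
          nlinarith
        have h4 : (l : ℝ) ≤ (p.1 : ℝ) + p.2 + 1 := by exact_mod_cast h3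
        rw [← add_div, div_le_div_iff₀ (by positivity) (by positivity)]
        nlinarith [pow_pos (show (0:ℝ) < 2 by norm_num) n]
      calc Ln μ n w ≤ ∑ p ∈ s2, (((p.1 : ℝ) + p.2) / 2 ^ n + 1/2^n) * μ.m (P2 p) := step
        _ = (∑ p ∈ s2, ((p.1 : ℝ) + p.2) / 2 ^ n * μ.m (P2 p))
            + 1/2^n * ∑ p ∈ s2, μ.m (P2 p) := by
            rw [Finset.mul_sum, ← Finset.sum_add_distrib]
            exact Finset.sum_congr rfl fun p _ => by ring
        _ = Ln μ n u + Ln μ n v + 1/2^n := by rw [hpairsum, htotal, mul_one]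
  have tu := Ln_tendsto μ u hu0 hu1
  have tv := Ln_tendsto μ v hv0 hv1
  have tw := Ln_tendsto μ w hw0 huv1
  have t2 : Filter.Tendsto (fun n : ℕ => Ln μ n u + Ln μ n v + 1/2^n)
      Filter.atTop (nhds (Integ μ u + Integ μ v + 0)) := by
    refine Filter.Tendsto.add (tu.add tv) ?_
    have : Filter.Tendsto (fun n : ℕ => ((1:ℝ)/2)^n) Filter.atTop (nhds 0) :=
      tendsto_pow_atTop_nhds_zero_of_lt_one (by norm_num) (by norm_num)
    simpa [div_pow] using this
  have h1 : Integ μ u + Integ μ v ≤ Integ μ w :=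
    le_of_tendsto_of_tendsto' (tu.add tv) tw fun n => (key n).1
  have h2 : Integ μ w ≤ Integ μ u + Integ μ v + 0 :=
    le_of_tendsto_of_tendsto' tw t2 fun n => (key n).2
  rw [add_zero] at h2
  exact le_antisymm h2 h1

end Integ


section Extension

theorem isAmenable_extension {G : Type*} [Group G] (N : Subgroup G) [N.Normal]
    (hN : IsAmenable N) (hQ : IsAmenable (G ⧸ N)) : IsAmenable G := by
  classical
  obtain ⟨mN, hN1, hNpos, hNadd, hNinv⟩ := hN
  obtain ⟨mQ, hQ1, hQpos, hQadd, hQinv⟩ := hQ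
  set νN : FinAddProb N := ⟨mN, hN1, hNpos, hNadd⟩ with hνN
  set μ : FinAddProb (G ⧸ N) := ⟨mQ, hQ1, hQpos, hQadd⟩ with hμ
  -- fiber measure function
  set f : Set G → G → ℝ := fun A x => mN {h : N | x * (h : G) ∈ A} with hf
  have hf_coset : ∀ (A : Set G) (x y : G), @Setoid.r _ (QuotientGroup.leftRel N) x y →
      f A x = f A y := by
    intro A x y hxy
    rw [QuotientGroup.leftRel_apply] at hxy
    set n₀ : N := ⟨x⁻¹ * y, hxy⟩ with hn₀
    have himg : {h : N | y * (h : G) ∈ A} = (fun h : N => n₀⁻¹ * h) '' {h : N | x * (h : G) ∈ A} := by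
      ext h
      simp only [Set.mem_image, Set.mem_setOf_eq]
      constructor
      · intro hy
        refine ⟨n₀ * h, ?_, by group⟩
        have : x * ((n₀ * h : N) : G) = y * (h : G) := by
          push_cast [hn₀]
          group
        rw [this]; exact hy
      · rintro ⟨h', hh', rfl⟩
        have : y * ((n₀⁻¹ * h' : N) : G) = x * (h' : G) := by
          push_cast [hn₀]
          group
        rw [this]; exact hh'
    rw [hf]
    simp only []
    rw [himg]
    have := hNinv n₀⁻¹ {h : N | x * (h : G) ∈ A}
    rw [show ((n₀⁻¹ * ·) '' {h : N | x * (h : G) ∈ A}) = ((fun h : N => n₀⁻¹ * h) '' {h : N | x * (h : G) ∈ A}) from rfl] at this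
    rw [this]
  set fbar : Set G → (G ⧸ N) → ℝ := fun A q => Quotient.liftOn' q (f A) (fun x y h => hf_coset A x y h) with hfbar
  have hfbar_mk : ∀ (A : Set G) (x : G), fbar A (QuotientGroup.mk x) = f A x := fun A x => rfl
  have hfb0 : ∀ A q, 0 ≤ fbar A q := by
    intro A q
    induction q using Quotient.inductionOn'
    exact hNpos _
  have hfb1 : ∀ A q, fbar A q ≤ 1 := by
    intro A q
    induction q using Quotient.inductionOn'
    exact νN.le_one _
  refine ⟨fun A => Integ μ (fbar A), ?_, ?_, ?_, ?_⟩
  · refine Integ_one μ _ fun q => ?_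
    induction q using Quotient.inductionOn' with
    | h x =>
      rw [hfbar_mk]
      simp only [hf, Set.mem_univ, Set.setOf_true]
      exact hN1
  · intro A
    exact Integ_nonneg μ _ (hfb0 A) (hfb1 A)
  · intro A B hAB
    have hdecomp : ∀ q, fbar (A ∪ B) q = fbar A q + fbar B q := by
      intro q
      induction q using Quotient.inductionOn' with
      | h x =>
        rw [hfbar_mk, hfbar_mk, hfbar_mk, hf]
        simp only []
        have hset : {h : N | x * (h : G) ∈ A ∪ B}
            = {h : N | x * (h : G) ∈ A} ∪ {h : N | x * (h : G) ∈ B} := by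
          ext h; simp [Set.mem_union]
        rw [hset]
        refine hNadd _ _ ?_
        refine Set.disjoint_left.mpr fun h hA hB => ?_
        exact Set.disjoint_left.mp hAB hA hB
    calc Integ μ (fbar (A ∪ B)) = Integ μ (fun q => fbar A q + fbar B q) := by
          congr 1; funext q; exact hdecomp q
      _ = Integ μ (fbar A) + Integ μ (fbar B) := by
          refine Integ_add μ _ _ (hfb0 A) (hfb0 B) fun q => ?_
          rw [← hdecomp q]; exact hfb1 _ q
  · intro g A
    have hcomp : ∀ q, fbar ((g * ·) '' A) q = fbar A ((QuotientGroup.mk g)⁻¹ * q) := by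
      intro q
      induction q using Quotient.inductionOn' with
      | h x =>
        have h1 : (QuotientGroup.mk g)⁻¹ * (QuotientGroup.mk x : G ⧸ N)
            = QuotientGroup.mk (g⁻¹ * x) := by
          rw [← QuotientGroup.mk_inv, ← QuotientGroup.mk_mul]
        rw [hfbar_mk, h1, hfbar_mk, hf]
        simp only []
        congr 1
        ext h
        simp only [Set.mem_setOf_eq, Set.mem_image]
        constructor
        · rintro ⟨a, ha, heq⟩
          have hxa : g⁻¹ * x * (h : G) = a := by
            have h2 := congrArg (fun z => g⁻¹ * z) heq
            simpa [mul_assoc] using h2.symm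
          rwa [hxa]
        · intro ha
          exact ⟨g⁻¹ * x * (h : G), ha, by group⟩
    have hτ : ∀ S : Set (G ⧸ N), μ.m ((fun q => (QuotientGroup.mk g)⁻¹ * q) ⁻¹' S) = μ.m S := by
      intro S
      have : (fun q : G ⧸ N => (QuotientGroup.mk g)⁻¹ * q) ⁻¹' S
          = ((QuotientGroup.mk g : G ⧸ N) * ·) '' S := by
        ext z
        simp only [Set.mem_preimage, Set.mem_image]
        constructor
        · intro hz
          exact ⟨(QuotientGroup.mk g)⁻¹ * z, hz, by group⟩
        · rintro ⟨w, hw, rfl⟩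
          have : (QuotientGroup.mk g : G ⧸ N)⁻¹ * (QuotientGroup.mk g * w) = w := by group
          rwa [this]
      rw [this]
      exact hQinv _ S
    calc Integ μ (fbar ((g * ·) '' A))
        = Integ μ ((fbar A) ∘ (fun q => (QuotientGroup.mk g)⁻¹ * q)) := by
          congr 1; funext q; exact hcomp q
      _ = Integ μ (fbar A) := Integ_comp μ _ _ hτ

end Extension


/-- transfer along an isomorphism -/
theorem isAmenable_of_mulEquiv {G H : Type*} [Group G] [Group H] (e : G ≃* H)
    (hG : IsAmenable G) : IsAmenable H := by
  obtain ⟨m, h1, hpos, hadd, hinv⟩ := hG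
  refine ⟨fun A => m (e ⁻¹' A), by simpa using h1, fun A => hpos _, ?_, ?_⟩
  · intro A B hAB
    dsimp only
    rw [Set.preimage_union]
    exact hadd _ _ (hAB.preimage e)
  · intro h A
    have hpre : e ⁻¹' ((h * ·) '' A) = (e.symm h * ·) '' (e ⁻¹' A) := by
      ext x
      simp only [Set.mem_preimage, Set.mem_image]
      constructor
      · rintro ⟨a, ha, heq⟩
        refine ⟨e.symm a, by simpa using ha, ?_⟩
        have h3 : e.symm (h * a) = e.symm h * e.symm a := by simp
        rw [heq] at h3
        simpa using h3.symm
      · rintro ⟨a, ha, rfl⟩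
        exact ⟨e a, ha, by simp⟩
    dsimp only
    rw [hpre, hinv]

open scoped commutatorElement in
theorem isAmenable_of_derivedSeries_eq_bot :
    ∀ (n : ℕ) (G : Type*) [Group G], derivedSeries G n = ⊥ → IsAmenable G := by
  intro n
  induction n with
  | zero =>
    intro G _ hbot
    rw [derivedSeries_zero] at hbot
    have hsub : ∀ a b : G, a = b := by
      intro a b
      have ha : a ∈ (⊥ : Subgroup G) := hbot ▸ Subgroup.mem_top a
      have hb : b ∈ (⊥ : Subgroup G) := hbot ▸ Subgroup.mem_top b
      rw [Subgroup.mem_bot] at ha hb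
      rw [ha, hb]
    letI : CommGroup G := { mul_comm := fun a b => hsub _ _ }
    exact isAmenable_of_comm G
  | succ n IH =>
    intro G _ hbot
    set H : Subgroup G := derivedSeries G n with hH
    haveI : H.Normal := derivedSeries_normal G n
    -- H is abelian
    have hcomm : ∀ a b : H, a * b = b * a := by
      intro a b
      have : ⁅(a : G), (b : G)⁆ ∈ derivedSeries G (n + 1) :=
        Subgroup.commutator_mem_commutator a.2 b.2
      rw [hbot, Subgroup.mem_bot, commutatorElement_eq_one_iff_mul_comm] at this
      exact Subtype.ext this
    letI : CommGroup H := { mul_comm := hcomm }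
    have hHamen : IsAmenable H := isAmenable_of_comm H
    have hquot : derivedSeries (G ⧸ H) n = ⊥ := by
      rw [← map_derivedSeries_eq (QuotientGroup.mk'_surjective H) n, ← hH]
      rw [Subgroup.map_eq_bot_iff, QuotientGroup.ker_mk']
    exact isAmenable_extension H hHamen (IH (G ⧸ H) hquot)


/-- Every (residually solvable)-by-amenable group is residually amenable. -/
theorem residuallyAmenable_of_residuallySolvable_by_amenable
    (G : Type) [Group G] (N : Subgroup G) [N.Normal]
    (hN : Residually solvableClass N) (hQ : IsAmenable (G ⧸ N)) :
    Residually amenableClass G := by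
  intro g hg
  by_cases hgN : g ∈ N
  · -- g ∈ N : use residual solvability of N
    have hgne : (⟨g, hgN⟩ : N) ≠ 1 := by
      intro h
      exact hg (congrArg Subtype.val h)
    obtain ⟨Q, φ, hsurj, hsolv, hne⟩ := hN ⟨g, hgN⟩ hgne
    obtain ⟨n, hn⟩ := (hsolv : IsSolvable Q).solvable
    set M : Subgroup G := (derivedSeries N n).map N.subtype with hM
    have hMN : M ≤ N := by
      rintro x ⟨y, _, rfl⟩
      exact y.2
    haveI hMnormal : M.Normal := by
      constructor
      intro x hx gg
      obtain ⟨y, hy, rfl⟩ := hx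
      have hmem : (MulAut.conjNormal gg : MulAut N) y ∈ derivedSeries (↥N) n := by
        rw [← map_derivedSeries_eq (MulAut.conjNormal gg : MulAut N).surjective n]
        exact Subgroup.mem_map_of_mem _ hy
      refine ⟨(MulAut.conjNormal gg : MulAut N) y, hmem, ?_⟩
      simp [MulAut.conjNormal_apply]
    have hgM : g ∉ M := by
      rintro ⟨y, hy, hyg⟩
      have hyg' : y = ⟨g, hgN⟩ := Subtype.ext hyg
      rw [hyg'] at hy
      have : φ ⟨g, hgN⟩ ∈ derivedSeries Q n :=
        map_derivedSeries_le_derivedSeries φ n (Subgroup.mem_map_of_mem φ hy)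
      rw [hn, Subgroup.mem_bot] at this
      exact hne this
    refine ⟨GrpCat.of (G ⧸ M), QuotientGroup.mk' M, QuotientGroup.mk'_surjective M, ?_, ?_⟩
    · show IsAmenable (G ⧸ M)
      set N' : Subgroup (G ⧸ M) := N.map (QuotientGroup.mk' M) with hN'
      haveI : N'.Normal := Subgroup.Normal.map ‹N.Normal› _ (QuotientGroup.mk'_surjective M)
      refine isAmenable_extension N' ?_ ?_
      · -- N' is solvable of derived length ≤ n, hence amenable
        have hψ : Function.Surjective ((QuotientGroup.mk' M).subgroupMap N) :=
          MonoidHom.subgroupMap_surjective (QuotientGroup.mk' M) N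
        have hbot : derivedSeries N' n = ⊥ := by
          rw [← map_derivedSeries_eq hψ n, Subgroup.map_eq_bot_iff]
          intro x hx
          rw [MonoidHom.mem_ker]
          refine Subtype.ext ?_
          show QuotientGroup.mk (x : G) = (1 : G ⧸ M)
          rw [QuotientGroup.eq_one_iff]
          exact ⟨x, hx, rfl⟩
        exact isAmenable_of_derivedSeries_eq_bot n N' hbot
      · -- quotient is isomorphic to G / N
        exact isAmenable_of_mulEquiv
          (QuotientGroup.quotientQuotientEquivQuotient M N hMN).symm hQ
    · show QuotientGroup.mk' M g ≠ 1
      rw [Ne, QuotientGroup.mk'_apply, QuotientGroup.eq_one_iff]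
      exact hgM
  · -- g ∉ N : the quotient G/N itself works
    refine ⟨GrpCat.of (G ⧸ N), QuotientGroup.mk' N, QuotientGroup.mk'_surjective N, hQ, ?_⟩
    show QuotientGroup.mk' N g ≠ 1
    rw [Ne, QuotientGroup.mk'_apply, QuotientGroup.eq_one_iff]
    exact hgN
end

section
/- Let C be a class of groups closed under free products. Then the free product of two LE-C groups is LE-C. -/
/-- `φ` is a `K`-almost-homomorphism: multiplicative on `K` and injective on `K`. -/
def KAlmostHom {G C : Type*} [Group G] [Group C] (K : Set G) (φ : G → C) : Prop :=
  (∀ k₁ ∈ K, ∀ k₂ ∈ K, φ (k₁ * k₂) = φ k₁ * φ k₂) ∧ Set.InjOn φ K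

/-- `G` is locally embeddable into the class `C` (`G` is LE-`C`) if every finite subset
of `G` admits an almost-homomorphism into some group of `C`. -/
def LEClass (C : GroupClass) (G : Type*) [Group G] : Prop :=
  ∀ K : Finset G, ∃ (Q : GrpCat.{0}) (φ : G → Q), C Q ∧ KAlmostHom (K : Set G) φ

open Monoid Pointwise

namespace FPAux

/-- Binary family indexed by `Bool`. -/
def MB (A B : Type) : Bool → Type := fun b => match b with | true => A | false => B

instance (A B : Type) [Group A] [Group B] : ∀ b, Group (MB A B b) :=
  fun b => match b with | true => ‹Group A› | false => ‹Group B›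

variable {A B : Type} [Group A] [Group B]

def toI : Coprod A B →* CoprodI (MB A B) :=
  Coprod.lift (CoprodI.of (M := MB A B) (i := true)) (CoprodI.of (M := MB A B) (i := false))

def ofI : CoprodI (MB A B) →* Coprod A B :=
  CoprodI.lift (fun b => match b with | true => Coprod.inl | false => Coprod.inr)

theorem ofI_toI : (ofI (A := A) (B := B)).comp toI = MonoidHom.id _ := by
  apply Coprod.hom_ext <;> ext x
  · exact CoprodI.lift_of _ _
  · exact CoprodI.lift_of _ _

theorem toI_ofI : (toI (A := A) (B := B)).comp ofI = MonoidHom.id _ := by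
  apply CoprodI.ext_hom
  intro i
  cases i <;> ext x
  · show toI (ofI (CoprodI.of (M := MB A B) (i := false) x)) = CoprodI.of x
    rw [show ofI (CoprodI.of (M := MB A B) (i := false) x) = Coprod.inr x from
      CoprodI.lift_of _ _]
    exact Coprod.lift_apply_inr _ _ x
  · show toI (ofI (CoprodI.of (M := MB A B) (i := true) x)) = CoprodI.of x
    rw [show ofI (CoprodI.of (M := MB A B) (i := true) x) = Coprod.inl x from
      CoprodI.lift_of _ _]
    exact Coprod.lift_apply_inl _ _ x

theorem toI_injective : Function.Injective (toI (A := A) (B := B)) := by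
  intro x y h
  have hx : ofI (toI x) = x := DFunLike.congr_fun (ofI_toI (A:=A) (B:=B)) x
  have hy : ofI (toI y) = y := DFunLike.congr_fun (ofI_toI (A:=A) (B:=B)) y
  rw [← hx, ← hy, h]

theorem ofI_injective : Function.Injective (ofI (A := A) (B := B)) := by
  intro x y h
  have hx : toI (ofI x) = x := DFunLike.congr_fun (toI_ofI (A:=A) (B:=B)) x
  have hy : toI (ofI y) = y := DFunLike.congr_fun (toI_ofI (A:=A) (B:=B)) y
  rw [← hx, ← hy, h]


section Words

set_option linter.unusedSectionVars false

variable {ι : Type} {M : ι → Type} [∀ i, Group (M i)] {N : ι → Type} [∀ i, Group (N i)]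

def lp (w : List (Σ i, M i)) : CoprodI M := (w.map fun p => CoprodI.of p.2).prod

@[simp] theorem lp_nil : lp ([] : List (Σ i, M i)) = 1 := rfl

@[simp] theorem lp_cons (p : Σ i, M i) (w : List (Σ i, M i)) :
    lp (p :: w) = CoprodI.of p.2 * lp w := by simp [lp]

@[simp] theorem lp_append (u v : List (Σ i, M i)) : lp (u ++ v) = lp u * lp v := by
  simp [lp]

def Reduced (w : List (Σ i, M i)) : Prop :=
  (∀ p ∈ w, p.2 ≠ 1) ∧ w.Chain' (fun p q => p.1 ≠ q.1)

theorem reduced_eq_of_lp_eq {u v : List (Σ i, M i)} (hu : Reduced u) (hv : Reduced v)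
    (h : lp u = lp v) : u = v := by
  classical
  have hprod : CoprodI.Word.prod ⟨u, hu.1, hu.2⟩ = CoprodI.Word.prod ⟨v, hv.1, hv.2⟩ := by
    simpa [CoprodI.Word.prod, lp] using h
  have := CoprodI.Word.equiv.symm.injective hprod
  exact congrArg CoprodI.Word.toList this

variable (φ : ∀ i, M i → N i) (L : ∀ i, Set (M i))

/-- Map a list of letters through the family `φ`. -/
def mapl (w : List (Σ i, M i)) : List (Σ i, N i) := w.map fun p => ⟨p.1, φ p.1 p.2⟩

@[simp] theorem mapl_nil : mapl φ ([] : List (Σ i, M i)) = [] := rfl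
@[simp] theorem mapl_cons (p : Σ i, M i) (w) :
    mapl φ (p :: w) = ⟨p.1, φ p.1 p.2⟩ :: mapl φ w := rfl
@[simp] theorem mapl_append (u v : List (Σ i, M i)) :
    mapl φ (u ++ v) = mapl φ u ++ mapl φ v := List.map_append

theorem phi_one (h1 : ∀ i, (1 : M i) ∈ L i)
    (hmul : ∀ i, ∀ a ∈ L i, ∀ b ∈ L i, φ i (a * b) = φ i a * φ i b) (i : ι) :
    φ i 1 = 1 := by
  have := hmul i 1 (h1 i) 1 (h1 i)
  rw [mul_one] at this
  exact (mul_eq_left.mp this.symm)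

/-- The key reduction lemma. -/
theorem reduce_key (h1 : ∀ i, (1 : M i) ∈ L i)
    (hmul : ∀ i, ∀ a ∈ L i, ∀ b ∈ L i, φ i (a * b) = φ i a * φ i b) :
    ∀ (u v : List (Σ i, M i)), Reduced u → Reduced v →
      (∀ p ∈ u, p.2 ∈ L p.1) → (∀ p ∈ v, p.2 ∈ L p.1) →
      (∀ (i : ι) (a b : M i), (⟨i, a⟩ : Σ i, M i) ∈ u → (⟨i, b⟩ : Σ i, M i) ∈ v →
        a * b ∈ L i) →
      ∃ w : List (Σ i, M i), Reduced w ∧ (∀ p ∈ w, p.2 ∈ L p.1) ∧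
        lp w = lp u * lp v ∧
        lp (mapl φ w) = lp (mapl φ u) * lp (mapl φ v) := by
  intro u
  induction u using List.reverseRecOn with
  | nil =>
    intro v _ hv _ hvL _
    exact ⟨v, hv, hvL, by simp, by simp⟩
  | append_singleton u' p ih =>
    rintro v hu hv huL hvL hprodL
    obtain ⟨i, a⟩ := p
    match v with
    | [] => exact ⟨u' ++ [⟨i, a⟩], hu, huL, by simp, by simp⟩
    | ⟨j, b⟩ :: v' =>
      by_cases hij : i = j
      · subst hij
        by_cases hab : a * b = 1
        · -- full cancellation of the two letters; recurse
          have hu' : Reduced u' := by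
            refine ⟨fun q hq => hu.1 q (by simp [hq]), (List.isChain_append.mp hu.2).1⟩
          have hv' : Reduced v' := by
            refine ⟨fun q hq => hv.1 q (by simp [hq]), (List.isChain_cons.mp hv.2).2⟩
          obtain ⟨w, hw, hwL, hwlp, hwlpN⟩ := ih v' hu' hv'
            (fun q hq => huL q (by simp [hq])) (fun q hq => hvL q (by simp [hq]))
            (fun k c d hc hd => hprodL k c d (by simp [hc]) (by simp [hd]))
          refine ⟨w, hw, hwL, ?_, ?_⟩
          · rw [hwlp]
            have : (CoprodI.of a : CoprodI M) * CoprodI.of b = 1 := by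
              rw [← MonoidHom.map_mul, hab, MonoidHom.map_one]
            simp [mul_assoc, ← mul_assoc (CoprodI.of a), this]
          · rw [hwlpN]
            have ha : a ∈ L i := huL ⟨i, a⟩ (by simp)
            have hb : b ∈ L i := hvL ⟨i, b⟩ (by simp)
            have : (CoprodI.of (φ i a) : CoprodI N) * CoprodI.of (φ i b) = 1 := by
              rw [← MonoidHom.map_mul, ← hmul i a ha b hb, hab,
                phi_one φ L h1 hmul, MonoidHom.map_one]
            simp [mapl, mul_assoc, ← mul_assoc (CoprodI.of (φ i a)), this]
        · -- merge the two letters into one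
          have hmemL : a * b ∈ L i :=
            hprodL i a b (by simp) (by simp)
          have hlastu' : ∀ x ∈ u'.getLast?, x.1 ≠ i := by
            have h3 := (List.isChain_append.mp hu.2).2.2
            intro x hx
            exact h3 x hx ⟨i, a⟩ rfl
          have hheadv' : ∀ y ∈ v'.head?, i ≠ y.1 := by
            intro y hy
            exact (List.isChain_cons.mp hv.2).1 y hy
          refine ⟨u' ++ ⟨i, a * b⟩ :: v', ⟨?_, ?_⟩, ?_, ?_, ?_⟩
          · intro q hq
            rcases List.mem_append.mp hq with h | h
            · exact hu.1 q (by simp [h])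
            · rcases List.mem_cons.mp h with h' | h'
              · subst h'; exact hab
              · exact hv.1 q (by simp [h'])
          · refine List.isChain_append.mpr ?_
            refine ⟨(List.isChain_append.mp hu.2).1, ?_, ?_⟩
            · exact List.isChain_cons.mpr ⟨hheadv', (List.isChain_cons.mp hv.2).2⟩
            · intro x hx y hy
              simp at hy
              subst hy
              exact hlastu' x hx
          · intro q hq
            rcases List.mem_append.mp hq with h | h
            · exact huL q (by simp [h])
            · rcases List.mem_cons.mp h with h' | h'
              · subst h'; exact hmemL
              · exact hvL q (by simp [h'])
          · simp [mul_assoc]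
          · have ha : a ∈ L i := huL ⟨i, a⟩ (by simp)
            have hb : b ∈ L i := hvL ⟨i, b⟩ (by simp)
            simp [mapl, hmul i a ha b hb, mul_assoc]
      · -- distinct indices: concatenation is already reduced
        refine ⟨(u' ++ [⟨i, a⟩]) ++ ⟨j, b⟩ :: v', ⟨?_, ?_⟩, ?_, by simp [mul_assoc], by simp [mapl, mul_assoc]⟩
        · intro q hq
          rcases (List.mem_append.mp hq) with h | h
          · exact hu.1 q h
          · exact hv.1 q h
        · refine List.isChain_append.mpr ?_
          refine ⟨hu.2, hv.2, ?_⟩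
          intro x hx y hy
          simp at hx hy
          subst hx
          subst hy
          exact hij
        · intro q hq
          rcases (List.mem_append.mp hq) with h | h
          · exact huL q h
          · exact hvL q h

theorem reduced_mapl (h1 : ∀ i, (1 : M i) ∈ L i)
    (hmul : ∀ i, ∀ a ∈ L i, ∀ b ∈ L i, φ i (a * b) = φ i a * φ i b)
    (hinj : ∀ i, Set.InjOn (φ i) (L i))
    {u : List (Σ i, M i)} (hu : Reduced u) (huL : ∀ p ∈ u, p.2 ∈ L p.1) :
    Reduced (mapl φ u) := by
  constructor
  · rintro p hp
    simp only [mapl, List.mem_map] at hp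
    obtain ⟨q, hq, rfl⟩ := hp
    intro hq1
    have hq1' : φ q.1 q.2 = 1 := hq1
    have : φ q.1 q.2 = φ q.1 1 := by rw [hq1', phi_one φ L h1 hmul]
    exact hu.1 q hq (hinj q.1 (huL q hq) (h1 q.1) this)
  · exact List.isChain_map_of_isChain (fun (p : Σ i, M i) => (⟨p.1, φ p.1 p.2⟩ : Σ i, N i))
      (fun p q h => h) hu.2

theorem mapl_injOn (hinj : ∀ i, Set.InjOn (φ i) (L i)) :
    ∀ u v : List (Σ i, M i), (∀ p ∈ u, p.2 ∈ L p.1) → (∀ p ∈ v, p.2 ∈ L p.1) →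
      mapl φ u = mapl φ v → u = v := by
  intro u
  induction u with
  | nil =>
    intro v _ _ h
    cases v with
    | nil => rfl
    | cons q v' => simp [mapl] at h
  | cons p u' ih =>
    intro v huL hvL h
    cases v with
    | nil => simp [mapl] at h
    | cons q v' =>
      obtain ⟨i, a⟩ := p
      obtain ⟨j, b⟩ := q
      simp only [mapl_cons, List.cons.injEq] at h
      obtain ⟨hhead, htail⟩ := h
      obtain ⟨rfl, hab⟩ := Sigma.mk.inj_iff.mp hhead
      have hab' : φ i a = φ i b := eq_of_heq hab
      have : a = b := hinj i (huL ⟨i, a⟩ (by simp)) (hvL ⟨i, b⟩ (by simp)) hab'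
      subst this
      have := ih v' (fun p hp => huL p (by simp [hp])) (fun p hp => hvL p (by simp [hp])) htail
      rw [this]

end Words

end FPAux

/-- If a class of groups `C` is closed under free products, then the free product of two
LE-`C` groups is LE-`C`. -/
theorem freeProduct_LE_of_closed_under_freeProducts (C : GroupClass)
    (hfp : ∀ (A B : Type) [Group A] [Group B], C A → C B → C (Monoid.Coprod A B))
    (G₁ G₂ : Type) [Group G₁] [Group G₂]
    (h₁ : LEClass C G₁) (h₂ : LEClass C G₂) :
    LEClass C (Monoid.Coprod G₁ G₂) := by
  classical
  intro K
  let wl : Monoid.Coprod G₁ G₂ → List (Σ b, FPAux.MB G₁ G₂ b) :=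
    fun x => (Monoid.CoprodI.Word.equiv (FPAux.toI x)).toList
  have hwl_red : ∀ x, FPAux.Reduced (wl x) := fun x =>
    ⟨(Monoid.CoprodI.Word.equiv (FPAux.toI x)).ne_one,
     (Monoid.CoprodI.Word.equiv (FPAux.toI x)).chain_ne⟩
  have hwl_prod : ∀ x, FPAux.lp (wl x) = FPAux.toI x := fun x =>
    Monoid.CoprodI.Word.equiv.symm_apply_apply (FPAux.toI x)
  let S : Set (Σ b, FPAux.MB G₁ G₂ b) :=
    ⋃ x ∈ (K : Set (Monoid.Coprod G₁ G₂)), {p | p ∈ wl x}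
  have hSfin : S.Finite :=
    Set.Finite.biUnion K.finite_toSet fun x _ => (wl x).finite_toSet
  have hT₁ : {a : G₁ | (⟨true, a⟩ : Σ b, FPAux.MB G₁ G₂ b) ∈ S}.Finite :=
    Set.Finite.preimage (Set.injOn_of_injective sigma_mk_injective) hSfin
  have hT₂ : {a : G₂ | (⟨false, a⟩ : Σ b, FPAux.MB G₁ G₂ b) ∈ S}.Finite :=
    Set.Finite.preimage (Set.injOn_of_injective sigma_mk_injective) hSfin
  let F₁ : Finset G₁ := hT₁.toFinset
  let F₂ : Finset G₂ := hT₂.toFinset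
  let K₁ : Finset G₁ := insert 1 (F₁ ∪ F₁ * F₁)
  let K₂ : Finset G₂ := insert 1 (F₂ ∪ F₂ * F₂)
  obtain ⟨Q₁, φ₁, hC₁, hKA₁⟩ := h₁ K₁
  obtain ⟨Q₂, φ₂, hC₂, hKA₂⟩ := h₂ K₂
  let φ : ∀ b, FPAux.MB G₁ G₂ b → FPAux.MB ↥Q₁ ↥Q₂ b :=
    fun b => match b with | true => φ₁ | false => φ₂
  let L : ∀ b, Set (FPAux.MB G₁ G₂ b) :=
    fun b => match b with | true => (↑K₁ : Set G₁) | false => (↑K₂ : Set G₂)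
  have h1 : ∀ b, (1 : FPAux.MB G₁ G₂ b) ∈ L b := by
    intro b; cases b
    · exact Finset.mem_coe.mpr (Finset.mem_insert_self 1 _)
    · exact Finset.mem_coe.mpr (Finset.mem_insert_self 1 _)
  have hmul : ∀ b, ∀ a ∈ L b, ∀ c ∈ L b, φ b (a * c) = φ b a * φ b c := by
    intro b; cases b
    · exact fun a ha c hc => hKA₂.1 a ha c hc
    · exact fun a ha c hc => hKA₁.1 a ha c hc
  have hinj : ∀ b, Set.InjOn (φ b) (L b) := by
    intro b; cases b
    · exact hKA₂.2
    · exact hKA₁.2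
  let Fset : ∀ b, Finset (FPAux.MB G₁ G₂ b) :=
    fun b => match b with | true => F₁ | false => F₂
  have hSF : ∀ p ∈ S, p.2 ∈ Fset p.1 := by
    rintro ⟨b, a⟩ hp
    cases b
    · exact hT₂.mem_toFinset.mpr hp
    · exact hT₁.mem_toFinset.mpr hp
  have hFK : ∀ b, (Fset b : Set (FPAux.MB G₁ G₂ b)) ⊆ L b := by
    intro b; cases b
    · exact fun a ha => Finset.mem_coe.mpr
        (Finset.mem_insert_of_mem (Finset.mem_union_left _ ha))
    · exact fun a ha => Finset.mem_coe.mpr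
        (Finset.mem_insert_of_mem (Finset.mem_union_left _ ha))
  have hFmul : ∀ b, ∀ a ∈ Fset b, ∀ c ∈ Fset b, a * c ∈ L b := by
    intro b; cases b
    · exact fun a ha c hc => Finset.mem_coe.mpr
        (Finset.mem_insert_of_mem (Finset.mem_union_right _ (Finset.mul_mem_mul ha hc)))
    · exact fun a ha c hc => Finset.mem_coe.mpr
        (Finset.mem_insert_of_mem (Finset.mem_union_right _ (Finset.mul_mem_mul ha hc)))
  have hlet : ∀ x ∈ (K : Set (Monoid.Coprod G₁ G₂)), ∀ p ∈ wl x, p ∈ S :=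
    fun x hx p hp => Set.mem_biUnion hx hp
  have hletL : ∀ x ∈ (K : Set (Monoid.Coprod G₁ G₂)), ∀ p ∈ wl x, p.2 ∈ L p.1 :=
    fun x hx p hp => hFK p.1 (hSF p (hlet x hx p hp))
  refine ⟨GrpCat.of (Monoid.Coprod ↥Q₁ ↥Q₂),
    fun x => FPAux.ofI (FPAux.lp (FPAux.mapl φ (wl x))), ?_, ?_, ?_⟩
  · exact hfp ↥Q₁ ↥Q₂ hC₁ hC₂
  · intro k₁ hk₁ k₂ hk₂
    obtain ⟨w, hwred, hwL, hwlp, hwlpN⟩ :=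
      FPAux.reduce_key φ L h1 hmul (wl k₁) (wl k₂) (hwl_red k₁) (hwl_red k₂)
        (hletL k₁ hk₁) (hletL k₂ hk₂)
        (fun i a b ha hb => hFmul i a (hSF ⟨i, a⟩ (hlet k₁ hk₁ _ ha))
          b (hSF ⟨i, b⟩ (hlet k₂ hk₂ _ hb)))
    have h12 : wl (k₁ * k₂) = w := by
      refine FPAux.reduced_eq_of_lp_eq (hwl_red _) hwred ?_
      rw [hwl_prod, hwlp, hwl_prod, hwl_prod, map_mul]
    show FPAux.ofI (FPAux.lp (FPAux.mapl φ (wl (k₁ * k₂)))) = _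
    rw [h12, hwlpN, map_mul]
  · intro k₁ hk₁ k₂ hk₂ h
    have h' : FPAux.lp (FPAux.mapl φ (wl k₁)) = FPAux.lp (FPAux.mapl φ (wl k₂)) :=
      FPAux.ofI_injective h
    have hm : FPAux.mapl φ (wl k₁) = FPAux.mapl φ (wl k₂) :=
      FPAux.reduced_eq_of_lp_eq
        (FPAux.reduced_mapl φ L h1 hmul hinj (hwl_red k₁) (hletL k₁ hk₁))
        (FPAux.reduced_mapl φ L h1 hmul hinj (hwl_red k₂) (hletL k₂ hk₂)) h'
    have huv : wl k₁ = wl k₂ :=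
      FPAux.mapl_injOn φ L hinj _ _ (hletL k₁ hk₁) (hletL k₂ hk₂) hm
    have hlp := congrArg FPAux.lp huv
    rw [hwl_prod, hwl_prod] at hlp
    exact FPAux.toI_injective hlp
end

section
/- Let C be a class of groups closed under finite direct products such that the free product of residually C groups is residually C. Then the free product of two LE-C groups is LE-C. -/
/-! ### Auxiliary machinery -/

open Monoid Monoid.CoprodI Monoid.CoprodI.Word

set_option linter.unusedSectionVars false

section CoprodEquiv
variable (A B : Type) [Group A] [Group B]

/-- The two-element family of groups `A`, `B` indexed by `Bool`. -/
def Mfun : Bool → Type := fun b => cond b A B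

instance MfunGroup : ∀ b, Group (Mfun A B b) :=
  fun b => Bool.rec (inferInstance : Group B) (inferInstance : Group A) b

noncomputable instance MfunDecEq : ∀ b, DecidableEq (Mfun A B b) :=
  fun b => Classical.decEq _

noncomputable def coprodToCoprodI : Coprod A B →* CoprodI (Mfun A B) :=
  Coprod.lift ((CoprodI.of (M := Mfun A B) (i := true) : A →* _))
    ((CoprodI.of (M := Mfun A B) (i := false) : B →* _))

noncomputable def coprodIToCoprod : CoprodI (Mfun A B) →* Coprod A B :=
  CoprodI.lift (fun b => Bool.rec (motive := fun b => Mfun A B b →* Coprod A B)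
    Coprod.inr Coprod.inl b)

noncomputable def coprodMulEquiv : Coprod A B ≃* CoprodI (Mfun A B) := by
  refine MonoidHom.toMulEquiv (coprodToCoprodI A B) (coprodIToCoprod A B) ?_ ?_
  · apply Coprod.hom_ext
    · ext x
      show coprodIToCoprod A B (CoprodI.of (M := Mfun A B) (i := true) x) = Coprod.inl x
      rw [coprodIToCoprod]
      exact CoprodI.lift_of _ _
    · ext x
      show coprodIToCoprod A B (CoprodI.of (M := Mfun A B) (i := false) x) = Coprod.inr x
      rw [coprodIToCoprod]
      exact CoprodI.lift_of _ _
  · apply CoprodI.ext_hom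
    intro i
    cases i
    · ext x
      show coprodToCoprodI A B (Coprod.inr x) = CoprodI.of (M := Mfun A B) (i := false) x
      rw [coprodToCoprodI]
      exact Coprod.lift_apply_inr _ _ x
    · ext x
      show coprodToCoprodI A B (Coprod.inl x) = CoprodI.of (M := Mfun A B) (i := true) x
      rw [coprodToCoprodI]
      exact Coprod.lift_apply_inl _ _ x
end CoprodEquiv

lemma head_of_take {α : Type*} {l : List α} {n : ℕ} {p : α} {ps : List α}
    (h : l.take n = p :: ps) : l.head? = some p := by
  rcases n with _ | n
  · simp at h
  rcases l with _ | ⟨q, qs⟩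
  · simp at h
  simp only [List.take_succ_cons] at h
  obtain ⟨rfl, -⟩ := List.cons.inj h
  rfl

section Words
variable {ι : Type} [DecidableEq ι] {M : ι → Type} [∀ i, Group (M i)] [∀ i, DecidableEq (M i)]
variable {N : Type} [Group N]

/-- product of images of letters of a list -/
def PsiL (δ : ∀ i, M i → N) (l : List (Σ i, M i)) : N := (l.map fun l => δ l.1 l.2).prod

lemma PsiL_cons (δ : ∀ i, M i → N) (a : Σ i, M i) (l : List (Σ i, M i)) :
    PsiL δ (a :: l) = δ a.1 a.2 * PsiL δ l := by simp [PsiL]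

lemma equivPair_cons' (i : ι) (m : M i) (w : Word M) (h1 : w.fstIdx ≠ some i) (h2 : m ≠ 1) :
    equivPair i (cons m w h1 h2) = ⟨m, w, h1⟩ :=
  (equivPair i).apply_eq_iff_eq_symm_apply.mpr (by rw [equivPair_symm, rcons, dif_neg h2])

lemma of_smul_cons_same (i : ι) (a m : M i) (w : Word M) (h1 : w.fstIdx ≠ some i) (h2 : m ≠ 1) :
    of a • cons m w h1 h2 = rcons ⟨a * m, w, h1⟩ := by
  rw [of_smul_def, equivPair_cons']

/-- computation of the action of a letter on a word whose head has the same index -/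
lemma of_smul_toList_head (i : ι) (a : M i) (r : Word M) {m : M i} {t : List (Σ i, M i)}
    (h : r.toList = ⟨i, m⟩ :: t) :
    (of a • r).toList = if a * m = 1 then t else ⟨i, a * m⟩ :: t := by
  have hm : m ≠ 1 := r.ne_one ⟨i, m⟩ (h ▸ List.mem_cons_self)
  have hch : List.IsChain (fun l l' : Σ i, M i => l.1 ≠ l'.1) (⟨i, m⟩ :: t) := h ▸ r.chain_ne
  rw [List.isChain_cons] at hch
  have hne1 : ∀ l ∈ t, Sigma.snd l ≠ 1 := fun l hl => r.ne_one l (h ▸ List.mem_cons_of_mem _ hl)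
  set w'' : Word M := ⟨t, hne1, hch.2⟩ with hw''
  have h1 : w''.fstIdx ≠ some i := by
    rw [fstIdx_ne_iff]
    intro l hl
    exact hch.1 l hl
  have hr : r = cons m w'' h1 hm := Word.ext (by simp [cons, hw'', h])
  rw [hr, of_smul_cons_same, rcons]
  split_ifs with hh
  · simp [hw'', dif_pos]
  · simp [cons, hw'']

lemma of_smul_toList_ne (i : ι) (a : M i) (r : Word M) (hne : r.fstIdx ≠ some i) (ha : a ≠ 1) :
    (of a • r).toList = ⟨i, a⟩ :: r.toList := by
  rw [← cons_eq_smul (h1 := hne) (h2 := ha)]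
  simp [cons]

/-- Shape of the reduced word of a product. -/
def Shape (u w r : List (Σ i, M i)) : Prop :=
  (∃ n k, r = u.take n ++ w.drop k) ∨
  (∃ (n k : ℕ) (i : ι) (x y : M i), u[n]? = some ⟨i, x⟩ ∧ w[k]? = some ⟨i, y⟩ ∧
    r = u.take n ++ ⟨i, x * y⟩ :: w.drop (k + 1))

lemma key_lemma (L : ∀ i, Set (M i)) (h1L : ∀ i, (1 : M i) ∈ L i) (δ : ∀ i, M i → N)
    (hδ : ∀ i, ∀ a ∈ L i, ∀ b ∈ L i, δ i (a * b) = δ i a * δ i b) :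
    ∀ (u w : Word M), (∀ l ∈ u.toList, l.2 ∈ L l.1) → (∀ l ∈ w.toList, l.2 ∈ L l.1) →
      PsiL δ (u.prod • w).toList = PsiL δ u.toList * PsiL δ w.toList ∧
      Shape u.toList w.toList (u.prod • w).toList := by
  have hδ1 : ∀ i, δ i 1 = 1 := by
    intro i
    have := hδ i 1 (h1L i) 1 (h1L i)
    rw [mul_one] at this
    exact (left_eq_mul.mp this)
  intro u
  induction u using consRecOn with
  | empty =>
    intro w _ hw
    rw [prod_empty, one_smul]
    refine ⟨by simp [PsiL], Or.inl ⟨0, 0, by simp⟩⟩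
  | cons i a u' hu1 ha1 ih =>
    intro w hu hw
    have hu' : ∀ l ∈ u'.toList, l.2 ∈ L l.1 := fun l hl =>
      hu l (by simp [cons, List.mem_cons_of_mem _ hl])
    have haL : a ∈ L i := hu ⟨i, a⟩ (by simp [cons])
    obtain ⟨Heq, Hshape⟩ := ih w hu' hw
    set r' : Word M := u'.prod • w with hr'
    have hps : (cons a u' hu1 ha1).prod • w = of a • r' := by
      rw [prod_cons, mul_smul]
    have hulist : (cons a u' hu1 ha1).toList = ⟨i, a⟩ :: u'.toList := rfl
    rw [hps, hulist]
    -- case on the head of r'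
    rcases hhead : r'.toList with _ | ⟨⟨j, m⟩, t⟩
    · -- r' is empty
      have hfst : r'.fstIdx ≠ some i := by simp [fstIdx, hhead]
      rw [of_smul_toList_ne i a r' hfst ha1, hhead]
      constructor
      · simp only [hhead, PsiL] at Heq
        simp only [List.map_nil, List.prod_nil] at Heq
        rw [PsiL_cons, PsiL_cons]
        simp only [PsiL, List.map_nil, List.prod_nil, mul_one]
        rw [mul_assoc, ← Heq, mul_one]
      · exact Or.inl ⟨1, w.toList.length, by simp⟩
    · by_cases hij : j = i
      · subst hij
        -- the head of r' must come from w
        have hmem : ∃ k', w.toList.drop k' = ⟨j, m⟩ :: t := by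
          rcases Hshape with ⟨n, k, he⟩ | ⟨n, k, i', x, y, hx, hy, he⟩
          · rw [hhead] at he
            rcases hT : u'.toList.take n with _ | ⟨p, ps⟩
            · rw [hT] at he
              exact ⟨k, by simpa using he.symm⟩
            · exfalso
              rw [hT] at he
              have hp := (List.cons.inj (by simpa using he)).1
              exact hu1 (by rw [fstIdx, head_of_take hT, ← hp]; rfl)
          · exfalso
            rw [hhead] at he
            rcases hT : u'.toList.take n with _ | ⟨p, ps⟩
            · rw [hT] at he
              simp only [List.nil_append] at he
              have hp := (List.cons.inj he).1
              have hji : j = i' := (Sigma.mk.inj_iff.mp hp).1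
              rcases List.take_eq_nil_iff.mp hT with hn | hnil
              · subst hn
                have : u'.toList.head? = some ⟨i', x⟩ := by
                  rw [List.head?_eq_getElem?, hx]
                exact hu1 (by rw [fstIdx, this]; simp [hji])
              · rw [hnil] at hx
                simp at hx
            · rw [hT] at he
              have hp := (List.cons.inj (by simpa using he)).1
              exact hu1 (by rw [fstIdx, head_of_take hT, ← hp]; rfl)
        obtain ⟨k, hdrop⟩ := hmem
        have hk : k < w.toList.length := by
          by_contra hc
          push_neg at hc
          rw [List.drop_eq_nil_of_le hc] at hdrop
          simp at hdrop
        rw [List.drop_eq_getElem_cons hk] at hdrop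
        obtain ⟨hwk, htail⟩ := List.cons.inj hdrop
        have hmW : (⟨j, m⟩ : Σ i, M i) ∈ w.toList := hwk ▸ List.getElem_mem hk
        have hmL : m ∈ L j := hw _ hmW
        have hget : w.toList[k]? = some ⟨j, m⟩ := by
          rw [List.getElem?_eq_getElem hk, hwk]
        have hPsir' : PsiL δ r'.toList = δ j m * PsiL δ t := by rw [hhead, PsiL_cons]
        rw [of_smul_toList_head j a r' hhead]
        split_ifs with h1
        · have hc : δ j a * δ j m = 1 := by
            rw [← hδ j a haL m hmL, h1, hδ1]
          constructor
          · rw [PsiL_cons, mul_assoc, ← Heq, hPsir', ← mul_assoc, hc, one_mul]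
          · exact Or.inl ⟨0, k + 1, by simpa using htail.symm⟩
        · constructor
          · rw [PsiL_cons, PsiL_cons, mul_assoc, ← Heq, hPsir',
              hδ j a haL m hmL, mul_assoc]
          · exact Or.inr ⟨0, k, j, a, m, by simp, hget, by simpa using htail.symm⟩
      · -- different indices: pure cons
        have hfst : r'.fstIdx ≠ some i := by simp [fstIdx, hhead, hij]
        rw [of_smul_toList_ne i a r' hfst ha1]
        constructor
        · rw [PsiL_cons, PsiL_cons, mul_assoc, Heq]
        · rcases Hshape with ⟨n, k, he⟩ | ⟨n, k, i', x, y, hx, hy, he⟩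
          · exact Or.inl ⟨n + 1, k, by rw [List.take_succ_cons, List.cons_append, he]⟩
          · exact Or.inr ⟨n + 1, k, i', x, y, by simpa using hx, hy,
              by rw [List.take_succ_cons, List.cons_append, he]⟩

lemma Psi_mul (L : ∀ i, Set (M i)) (h1L : ∀ i, (1 : M i) ∈ L i) (δ : ∀ i, M i → N)
    (hδ : ∀ i, ∀ a ∈ L i, ∀ b ∈ L i, δ i (a * b) = δ i a * δ i b) (x y : CoprodI M)
    (hx : ∀ l ∈ (Word.equiv x).toList, l.2 ∈ L l.1)
    (hy : ∀ l ∈ (Word.equiv y).toList, l.2 ∈ L l.1) :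
    PsiL δ (Word.equiv (x * y)).toList
      = PsiL δ (Word.equiv x).toList * PsiL δ (Word.equiv y).toList := by
  have h1 : Word.equiv (x * y) = (Word.equiv x).prod • (Word.equiv y) := by
    have hx' : (Word.equiv x).prod = x := Word.equiv.symm_apply_apply x
    rw [hx']
    exact mul_smul x y (Word.empty (M := M))
  rw [h1]
  exact (key_lemma L h1L δ hδ (Word.equiv x) (Word.equiv y) hx hy).1

variable {Q : ι → Type} [∀ i, Group (Q i)] [∀ i, DecidableEq (Q i)]

lemma map_list_inj (L : ∀ i, Set (M i)) (φ : ∀ i, M i → Q i)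
    (hinj : ∀ i, Set.InjOn (φ i) (L i)) :
    ∀ (l l' : List (Σ i, M i)), (∀ a ∈ l, a.2 ∈ L a.1) → (∀ a ∈ l', a.2 ∈ L a.1) →
      l.map (fun a => (⟨a.1, φ a.1 a.2⟩ : Σ i, Q i)) = l'.map (fun a => ⟨a.1, φ a.1 a.2⟩) →
      l = l' := by
  intro l
  induction l with
  | nil =>
    intro l' _ _ h
    cases l' with
    | nil => rfl
    | cons b bs => simp at h
  | cons a as ih =>
    intro l' hl hl' h
    cases l' with
    | nil => simp at h
    | cons b bs =>
      simp only [List.map_cons] at h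
      obtain ⟨hab, hrest⟩ := List.cons.inj h
      rcases a with ⟨ia, ma⟩
      rcases b with ⟨ib, mb⟩
      obtain ⟨hi, hheq⟩ := Sigma.mk.inj_iff.mp hab
      subst hi
      have hφ : φ ia ma = φ ia mb := eq_of_heq hheq
      have hm : ma = mb := hinj ia (hl _ (List.mem_cons_self))
        (hl' _ (List.mem_cons_self)) hφ
      subst hm
      rw [ih bs (fun p hp => hl p (List.mem_cons_of_mem _ hp))
        (fun p hp => hl' p (List.mem_cons_of_mem _ hp)) hrest]

/-- the image word under a letterwise map -/
def mapWord (φ : ∀ i, M i → Q i) (v : Word M)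
    (hne : ∀ l ∈ v.toList, φ l.1 l.2 ≠ 1) : Word Q where
  toList := v.toList.map fun a => ⟨a.1, φ a.1 a.2⟩
  ne_one := by
    intro p hp
    obtain ⟨a, ha, rfl⟩ := List.mem_map.mp hp
    exact hne a ha
  chain_ne := by
    rw [List.isChain_map]
    exact v.chain_ne

lemma mapWord_prod (φ : ∀ i, M i → Q i) (v : Word M)
    (hne : ∀ l ∈ v.toList, φ l.1 l.2 ≠ 1) :
    (mapWord φ v hne).prod = PsiL (fun i m => CoprodI.of (φ i m)) v.toList := by
  show (List.map _ (List.map _ v.toList)).prod = _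
  rw [List.map_map]
  rfl

lemma Psi_inj_words (L : ∀ i, Set (M i)) (h1L : ∀ i, (1 : M i) ∈ L i)
    (φ : ∀ i, M i → Q i) (h1φ : ∀ i, φ i 1 = 1)
    (hinj : ∀ i, Set.InjOn (φ i) (L i)) (w w' : Word M)
    (hw : ∀ l ∈ w.toList, l.2 ∈ L l.1) (hw' : ∀ l ∈ w'.toList, l.2 ∈ L l.1)
    (h : PsiL (fun i m => CoprodI.of (φ i m)) w.toList
       = PsiL (fun i m => CoprodI.of (φ i m)) w'.toList) : w = w' := by
  have hne : ∀ (v : Word M), (∀ l ∈ v.toList, l.2 ∈ L l.1) →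
      ∀ l ∈ v.toList, φ l.1 l.2 ≠ 1 := by
    intro v hv l hl hcon
    have h2 : l.2 = 1 := hinj l.1 (hv l hl) (h1L l.1) (by rw [h1φ]; exact hcon)
    exact v.ne_one l hl h2
  have hpeq : (mapWord φ w (hne w hw)).prod = (mapWord φ w' (hne w' hw')).prod := by
    rw [mapWord_prod, mapWord_prod, h]
  have hweq : mapWord φ w (hne w hw) = mapWord φ w' (hne w' hw') :=
    (Word.equiv (M := Q)).symm.injective hpeq
  have hlist : w.toList.map (fun a => (⟨a.1, φ a.1 a.2⟩ : Σ i, Q i))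
      = w'.toList.map (fun a => ⟨a.1, φ a.1 a.2⟩) := congrArg Word.toList hweq
  exact Word.ext (map_list_inj L φ hinj w.toList w'.toList hw hw' hlist)

end Words

/-! ### Residual lemmas -/

lemma residually_of_C (C : GroupClass) {R : Type} [Group R] (h : C R) : Residually C R :=
  fun g hg => ⟨GrpCat.of R, MonoidHom.id R, Function.surjective_id, h, hg⟩

lemma residually_congr (C : GroupClass) {R S : Type} [Group R] [Group S] (e : R ≃* S)
    (h : Residually C S) : Residually C R := by
  intro g hg
  have hge : e g ≠ 1 := fun h' => hg (by rwa [← map_one e, e.injective.eq_iff] at h')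
  obtain ⟨Q, ψ, hsurj, hC, hne⟩ := h (e g) hge
  exact ⟨Q, ψ.comp e.toMonoidHom, hsurj.comp e.surjective, hC, hne⟩

lemma residually_separate (C : GroupClass)
    (hprod : ∀ (G H : Type) [Group G] [Group H], C G → C H → C (G × H))
    {R : Type} [Group R] (hR : Residually C R) (Q₀ : GrpCat.{0}) (hC₀ : C Q₀)
    (s : Finset R) (hs : ∀ d ∈ s, d ≠ 1) :
    ∃ (Q : GrpCat.{0}) (ψ : R →* Q), C Q ∧ ∀ d ∈ s, ψ d ≠ 1 := by
  classical
  induction s using Finset.induction with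
  | empty => exact ⟨Q₀, 1, hC₀, by simp⟩
  | @insert a s' ha ih =>
    obtain ⟨Q, ψ, hCQ, hψ⟩ := ih (fun d hd => hs d (Finset.mem_insert_of_mem hd))
    obtain ⟨Qa, θ, hsurj, hCa, hθ⟩ := hR a (hs a (Finset.mem_insert_self a s'))
    refine ⟨GrpCat.of (↥Qa × ↥Q), θ.prod ψ, hprod _ _ hCa hCQ, ?_⟩
    intro d hd
    rcases Finset.mem_insert.mp hd with rfl | hd'
    · exact fun hcontra => hθ (congrArg Prod.fst hcontra)
    · exact fun hcontra => hψ d hd' (congrArg Prod.snd hcontra)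

lemma residually_injOn (C : GroupClass)
    (hprod : ∀ (G H : Type) [Group G] [Group H], C G → C H → C (G × H))
    {R : Type} [Group R] (hR : Residually C R) (Q₀ : GrpCat.{0}) (hC₀ : C Q₀)
    (F : Finset R) :
    ∃ (Q : GrpCat.{0}) (ψ : R →* Q), C Q ∧ Set.InjOn ψ (F : Set R) := by
  classical
  set D : Finset R := ((F ×ˢ F).image fun p => p.1 * p.2⁻¹).filter (· ≠ 1) with hD
  obtain ⟨Q, ψ, hCQ, hψ⟩ := residually_separate C hprod hR Q₀ hC₀ D
    (fun d hd => (Finset.mem_filter.mp hd).2)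
  refine ⟨Q, ψ, hCQ, ?_⟩
  intro x hx y hy hxy
  by_contra hne
  have hmem : x * y⁻¹ ∈ D := by
    rw [hD, Finset.mem_filter]
    constructor
    · exact Finset.mem_image.mpr ⟨(x, y), Finset.mem_product.mpr ⟨hx, hy⟩, rfl⟩
    · exact fun hc => hne (mul_inv_eq_one.mp hc)
  exact hψ _ hmem (by rw [map_mul, map_inv, hxy, mul_inv_cancel])


section Assemble
variable {G₁ G₂ Q₁ Q₂ : Type} [Group G₁] [Group G₂] [Group Q₁] [Group Q₂]

/-- letter sets as a `Bool`-indexed family -/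
def Lset (S1 : Set G₁) (S2 : Set G₂) : ∀ b, Set (Mfun G₁ G₂ b) :=
  fun b => Bool.rec (motive := fun b => Set (Mfun G₁ G₂ b)) S2 S1 b

/-- a `Bool`-indexed family of maps -/
def phiQ (φ₁ : G₁ → Q₁) (φ₂ : G₂ → Q₂) : ∀ b, Mfun G₁ G₂ b → Mfun Q₁ Q₂ b :=
  fun b => Bool.rec (motive := fun b => Mfun G₁ G₂ b → Mfun Q₁ Q₂ b) φ₂ φ₁ b

/-- the letterwise map into the free product of the targets -/
noncomputable def deltaQ (φ₁ : G₁ → Q₁) (φ₂ : G₂ → Q₂) :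
    ∀ b, Mfun G₁ G₂ b → CoprodI (Mfun Q₁ Q₂) :=
  fun b m => CoprodI.of (phiQ φ₁ φ₂ b m)

end Assemble

/-- If a class of groups `C` is closed under finite direct products and the free product
of residually `C` groups is residually `C`, then the free product of two LE-`C` groups
is LE-`C`. -/
theorem freeProduct_LE_of_freeProduct_residually (C : GroupClass)
    (hprod : ∀ (G H : Type) [Group G] [Group H], C G → C H → C (G × H))
    (hfp : ∀ (A B : Type) [Group A] [Group B],
      Residually C A → Residually C B → Residually C (Monoid.Coprod A B))
    (G₁ G₂ : Type) [Group G₁] [Group G₂]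
    (h₁ : LEClass C G₁) (h₂ : LEClass C G₂) :
    LEClass C (Monoid.Coprod G₁ G₂) := by
  classical
  intro K
  set M : Bool → Type := Mfun G₁ G₂ with hM
  set e : Coprod G₁ G₂ ≃* CoprodI M := coprodMulEquiv G₁ G₂ with he
  set K' : Finset (CoprodI M) := K.image e with hK'
  -- letters
  set letters : Finset (Σ b, M b) := K'.biUnion fun x => (Word.equiv (ι := Bool) (M := M) x).toList.toFinset
    with hletters
  have hfin1 : {m : G₁ | (⟨true, m⟩ : Σ b, M b) ∈ letters}.Finite := by
    apply Set.Finite.preimage (f := fun m : G₁ => (⟨true, m⟩ : Σ b, M b))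
      (fun a _ b _ hab => eq_of_heq (Sigma.mk.inj_iff.mp hab).2) letters.finite_toSet
  have hfin2 : {m : G₂ | (⟨false, m⟩ : Σ b, M b) ∈ letters}.Finite := by
    apply Set.Finite.preimage (f := fun m : G₂ => (⟨false, m⟩ : Σ b, M b))
      (fun a _ b _ hab => eq_of_heq (Sigma.mk.inj_iff.mp hab).2) letters.finite_toSet
  set S1 : Finset G₁ := insert 1 (hfin1.toFinset ∪ hfin1.toFinset.image fun a => a⁻¹) with hS1
  set S2 : Finset G₂ := insert 1 (hfin2.toFinset ∪ hfin2.toFinset.image fun a => a⁻¹) with hS2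
  obtain ⟨Q₁, φ₁, hCQ₁, hmul₁, hinj₁⟩ := h₁ S1
  obtain ⟨Q₂, φ₂, hCQ₂, hmul₂, hinj₂⟩ := h₂ S2
  have h1S1 : (1 : G₁) ∈ S1 := Finset.mem_insert_self 1 _
  have h1S2 : (1 : G₂) ∈ S2 := Finset.mem_insert_self 1 _
  have hφ₁1 : φ₁ 1 = 1 := by
    have := hmul₁ 1 h1S1 1 h1S1
    rw [one_mul] at this
    exact left_eq_mul.mp this
  have hφ₂1 : φ₂ 1 = 1 := by
    have := hmul₂ 1 h1S2 1 h1S2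
    rw [one_mul] at this
    exact left_eq_mul.mp this
  -- good letter sets
  have h1L : ∀ b, (1 : Mfun G₁ G₂ b) ∈ Lset (↑S1) (↑S2) b := by
    intro b
    cases b
    · exact h1S2
    · exact h1S1
  have hgood : ∀ x ∈ K', ∀ l ∈ (Word.equiv x).toList, l.2 ∈ Lset (↑S1) (↑S2) l.1 := by
    intro x hx l hl
    have hmem : l ∈ letters := Finset.mem_biUnion.mpr ⟨x, hx, List.mem_toFinset.mpr hl⟩
    rcases l with ⟨b, m⟩
    cases b
    · show m ∈ (S2 : Set G₂)
      rw [hS2]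
      push_cast
      exact Set.mem_insert_of_mem _ (Or.inl (hfin2.mem_toFinset.mpr hmem))
    · show m ∈ (S1 : Set G₁)
      rw [hS1]
      push_cast
      exact Set.mem_insert_of_mem _ (Or.inl (hfin1.mem_toFinset.mpr hmem))
  have hφQ1 : ∀ b, phiQ φ₁ φ₂ b 1 = 1 := by
    intro b
    cases b
    · exact hφ₂1
    · exact hφ₁1
  have hinjQ : ∀ b, Set.InjOn (phiQ φ₁ φ₂ b) (Lset (↑S1) (↑S2) b) := by
    intro b
    cases b
    · exact hinj₂
    · exact hinj₁
  have hδ : ∀ b, ∀ a ∈ Lset (↑S1) (↑S2) b, ∀ c ∈ Lset (↑S1) (↑S2) b,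
      deltaQ φ₁ φ₂ b (a * c) = deltaQ φ₁ φ₂ b a * deltaQ φ₁ φ₂ b c := by
    intro b
    cases b
    · intro a ha c hc
      show CoprodI.of (M := Mfun ↥Q₁ ↥Q₂) (i := false) (φ₂ (a * c))
          = CoprodI.of (M := Mfun ↥Q₁ ↥Q₂) (i := false) (φ₂ a)
            * CoprodI.of (M := Mfun ↥Q₁ ↥Q₂) (i := false) (φ₂ c)
      exact (congrArg (CoprodI.of (M := Mfun ↥Q₁ ↥Q₂) (i := false)) (hmul₂ a ha c hc)).trans (map_mul _ _ _)
    · intro a ha c hc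
      show CoprodI.of (M := Mfun ↥Q₁ ↥Q₂) (i := true) (φ₁ (a * c))
          = CoprodI.of (M := Mfun ↥Q₁ ↥Q₂) (i := true) (φ₁ a)
            * CoprodI.of (M := Mfun ↥Q₁ ↥Q₂) (i := true) (φ₁ c)
      exact (congrArg (CoprodI.of (M := Mfun ↥Q₁ ↥Q₂) (i := true)) (hmul₁ a ha c hc)).trans (map_mul _ _ _)
  have hφNmul : ∀ x ∈ K', ∀ y ∈ K',
      PsiL (deltaQ φ₁ φ₂) (Word.equiv (x * y)).toList
        = PsiL (deltaQ φ₁ φ₂) (Word.equiv x).toList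
          * PsiL (deltaQ φ₁ φ₂) (Word.equiv y).toList := by
    intro x hx y hy
    exact Psi_mul _ h1L _ hδ x y (hgood x hx) (hgood y hy)
  have hφNinj : Set.InjOn (fun x => PsiL (deltaQ φ₁ φ₂) (Word.equiv x).toList)
      (K' : Set (CoprodI (Mfun G₁ G₂))) := by
    intro x hx y hy hxy
    have hwx := hgood x (Finset.mem_coe.mp hx)
    have hwy := hgood y (Finset.mem_coe.mp hy)
    have := Psi_inj_words _ h1L (phiQ φ₁ φ₂) hφQ1 hinjQ (Word.equiv x) (Word.equiv y)
      hwx hwy hxy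
    exact Word.equiv.injective this
  -- residual separation
  have hres : Residually C (CoprodI (Mfun ↥Q₁ ↥Q₂)) :=
    residually_congr C (coprodMulEquiv ↥Q₁ ↥Q₂).symm
      (hfp ↥Q₁ ↥Q₂ (residually_of_C C hCQ₁) (residually_of_C C hCQ₂))
  obtain ⟨Q₀, φ₀, hC₀, -⟩ := h₁ ∅
  obtain ⟨Qfin, ψ, hCf, hinjψ⟩ := residually_injOn C hprod hres Q₀ hC₀
    (K'.image fun x => PsiL (deltaQ φ₁ φ₂) (Word.equiv x).toList)
  refine ⟨Qfin, fun z => ψ (PsiL (deltaQ φ₁ φ₂) (Word.equiv (e z)).toList), hCf, ?_, ?_⟩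
  · intro k₁ hk₁ k₂ hk₂
    have m₁ : e k₁ ∈ K' := Finset.mem_image_of_mem e hk₁
    have m₂ : e k₂ ∈ K' := Finset.mem_image_of_mem e hk₂
    show ψ (PsiL (deltaQ φ₁ φ₂) (Word.equiv (e (k₁ * k₂))).toList) = _
    rw [map_mul e, hφNmul _ m₁ _ m₂, map_mul ψ]
  · intro k₁ hk₁ k₂ hk₂ hk
    have m₁ : e k₁ ∈ K' := Finset.mem_image_of_mem e hk₁
    have m₂ : e k₂ ∈ K' := Finset.mem_image_of_mem e hk₂
    have hφeq : PsiL (deltaQ φ₁ φ₂) (Word.equiv (e k₁)).toList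
        = PsiL (deltaQ φ₁ φ₂) (Word.equiv (e k₂)).toList :=
      hinjψ (Finset.mem_coe.mpr (Finset.mem_image_of_mem _ m₁))
        (Finset.mem_coe.mpr (Finset.mem_image_of_mem _ m₂)) hk
    exact e.injective (hφNinj (Finset.mem_coe.mpr m₁) (Finset.mem_coe.mpr m₂) hφeq)
end
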